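/- arXiv:1706.09136 — 8 statements merged into one kernel-verified Lean document; each statement's English description precedes it below -/
import Mathlib

section
/- For every prime p, \sum_{0 < n_1 < n_2 < p} 1/(n_1 n_2^3) \equiv 0 \pmod p and \sum_{0 < n_1 < n_2 < p} 1/(n_1^3 n_2) \equiv 0 \pmod p; more generally every depth-2 multiple harmonic sum of weight 4 modulo p vanishes for p > 5: \sum_{0<n_1<n_2<p} n_1^{-a} n_2^{-b} \equiv 0 \pmod p whenever a + b = 4, a, b \ge 1. -/
open Finset

set_option maxRecDepth 100000

/-- Power sum `∑_{n=1}^{p-1} n^{-k} = 0` in `ZMod p` when `1 ≤ k < p - 1`. -/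
lemma power_sum_inv_zero (p : ℕ) (hp : p.Prime) (k : ℕ) (hk1 : 1 ≤ k) (hk2 : k < p - 1) :
    ∑ n ∈ Ico 1 p, ((n : ZMod p)⁻¹) ^ k = 0 := by
  haveI : Fact p.Prime := ⟨hp⟩
  have hp0 : 0 < p := hp.pos
  have h1 : ∑ n ∈ Ico 1 p, ((n : ZMod p)⁻¹) ^ k
      = ∑ n ∈ Finset.range p, ((n : ZMod p)⁻¹) ^ k := by
    rw [Finset.range_eq_Ico, Finset.sum_eq_sum_Ico_succ_bot hp0]
    simp [zero_pow (by omega : k ≠ 0)]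
  have h2 : ∑ n ∈ Finset.range p, ((n : ZMod p)⁻¹) ^ k
      = ∑ x : ZMod p, (x⁻¹) ^ k := by
    refine Finset.sum_nbij' (fun n => (n : ZMod p)) (fun x => x.val) ?_ ?_ ?_ ?_ ?_
    · intro n _; exact Finset.mem_univ _
    · intro x _; exact Finset.mem_range.2 (ZMod.val_lt x)
    · intro n hn; exact ZMod.val_cast_of_lt (Finset.mem_range.1 hn)
    · intro x _; simp [ZMod.natCast_val, ZMod.cast_id]
    · intro n _; rfl
  have h3 : ∑ x : ZMod p, (x⁻¹) ^ k = ∑ x : ZMod p, x ^ k :=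
    Fintype.sum_bijective (fun x : ZMod p => x⁻¹) inv_involutive.bijective _ _ (fun x => rfl)
  have h4 : ∑ x : ZMod p, x ^ k = 0 := by
    apply FiniteField.sum_pow_lt_card_sub_one
    rwa [ZMod.card]
  rw [h1, h2, h3, h4]

theorem depth_two_weight_four_vanishes (p : ℕ) (hp : p.Prime) (hp5 : 5 < p)
    (a b : ℕ) (ha : 1 ≤ a) (hb : 1 ≤ b) (hab : a + b = 4) :
    ∑ n2 ∈ Ico 1 p, ∑ n1 ∈ Ico 1 n2,
      ((n1 : ZMod p)⁻¹) ^ a * ((n2 : ZMod p)⁻¹) ^ b = 0 := by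
  haveI : Fact p.Prime := ⟨hp⟩
  set S : ℕ → ℕ → ZMod p := fun x y =>
    ∑ n2 ∈ Ico 1 p, ∑ n1 ∈ Ico 1 n2, ((n1 : ZMod p)⁻¹) ^ x * ((n2 : ZMod p)⁻¹) ^ y with hS
  -- reflection symmetry: S a b = S b a
  have key : ∀ n : ℕ, n ∈ Ico 1 p → ((p - n : ℕ) : ZMod p) = -(n : ZMod p) := by
    intro n hn
    rw [mem_Ico] at hn
    have : ((p - n : ℕ) : ZMod p) = (p : ZMod p) - (n : ZMod p) := by
      push_cast [Nat.cast_sub hn.2.le]; ring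
    rw [this, ZMod.natCast_self, zero_sub]
  have hrefl : S a b = S b a := by
    rw [hS]
    simp only
    rw [Finset.sum_sigma', Finset.sum_sigma']
    apply Finset.sum_nbij' (i := fun q => (⟨p - q.2, p - q.1⟩ : Σ _ : ℕ, ℕ))
      (j := fun q => (⟨p - q.2, p - q.1⟩ : Σ _ : ℕ, ℕ))
    · rintro ⟨n2, n1⟩ hq
      simp only [Finset.mem_sigma, mem_Ico] at hq ⊢
      omega
    · rintro ⟨n2, n1⟩ hq
      simp only [Finset.mem_sigma, mem_Ico] at hq ⊢
      omega
    · rintro ⟨n2, n1⟩ hq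
      simp only [Finset.mem_sigma, mem_Ico] at hq
      simp only [Sigma.mk.inj_iff, heq_eq_eq]
      omega
    · rintro ⟨n2, n1⟩ hq
      simp only [Finset.mem_sigma, mem_Ico] at hq
      simp only [Sigma.mk.inj_iff, heq_eq_eq]
      omega
    · rintro ⟨n2, n1⟩ hq
      simp only [Finset.mem_sigma, mem_Ico] at hq
      have h1 : ((p - n1 : ℕ) : ZMod p) = -(n1 : ZMod p) := by
        apply key; rw [mem_Ico]; omega
      have h2 : ((p - n2 : ℕ) : ZMod p) = -(n2 : ZMod p) := by
        apply key; rw [mem_Ico]; omega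
      have hsign : (-1 : ZMod p) ^ a * (-1 : ZMod p) ^ b = 1 := by
        rw [← pow_add, hab]; norm_num
      rw [h1, h2, inv_neg, inv_neg, neg_pow, neg_pow]
      linear_combination -((((n1 : ZMod p))⁻¹ ^ a * ((n2 : ZMod p))⁻¹ ^ b) * hsign)
  -- shuffle: S a b + S b a + diagonal = (∑ n⁻¹^a) * (∑ n⁻¹^b)
  have hsplit :
      (∑ n ∈ Ico 1 p, ((n : ZMod p)⁻¹) ^ a) * (∑ n ∈ Ico 1 p, ((n : ZMod p)⁻¹) ^ b)
        = S a b + S b a + ∑ n ∈ Ico 1 p, ((n : ZMod p)⁻¹) ^ (a + b) := by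
    rw [Finset.sum_mul_sum, Finset.sum_comm]
    have expand : ∀ n2 ∈ Ico 1 p,
        ∑ n1 ∈ Ico 1 p, ((n1 : ZMod p)⁻¹) ^ a * ((n2 : ZMod p)⁻¹) ^ b
          = (∑ n1 ∈ Ico 1 n2, ((n1 : ZMod p)⁻¹) ^ a * ((n2 : ZMod p)⁻¹) ^ b)
            + (((n2 : ZMod p)⁻¹) ^ a * ((n2 : ZMod p)⁻¹) ^ b
              + ∑ n1 ∈ Ico (n2 + 1) p, ((n1 : ZMod p)⁻¹) ^ a * ((n2 : ZMod p)⁻¹) ^ b) := by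
      intro n2 hn2
      rw [mem_Ico] at hn2
      rw [← Finset.sum_Ico_consecutive _ (by omega : 1 ≤ n2) (by omega : n2 ≤ p),
        Finset.sum_eq_sum_Ico_succ_bot (by omega : n2 < p)]
    rw [Finset.sum_congr rfl expand, Finset.sum_add_distrib, Finset.sum_add_distrib]
    have hgt : ∑ n2 ∈ Ico 1 p, ∑ n1 ∈ Ico (n2 + 1) p,
        ((n1 : ZMod p)⁻¹) ^ a * ((n2 : ZMod p)⁻¹) ^ b = S b a := by
      rw [Finset.sum_Ico_Ico_comm' 1 p (fun i j => ((j : ZMod p)⁻¹) ^ a * ((i : ZMod p)⁻¹) ^ b)]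
      rw [hS]
      apply Finset.sum_congr rfl; intro n2 _
      apply Finset.sum_congr rfl; intro n1 _
      ring
    have hdiag : ∀ n ∈ Ico 1 p,
        ((n : ZMod p)⁻¹) ^ a * ((n : ZMod p)⁻¹) ^ b = ((n : ZMod p)⁻¹) ^ (a + b) := by
      intro n _; rw [pow_add]
    rw [hgt, Finset.sum_congr rfl hdiag, hS]
    ring
  have hp1 : a < p - 1 := by omega
  have hPa : ∑ n ∈ Ico 1 p, ((n : ZMod p)⁻¹) ^ a = 0 := power_sum_inv_zero p hp a ha hp1
  have hPab : ∑ n ∈ Ico 1 p, ((n : ZMod p)⁻¹) ^ (a + b) = 0 :=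
    power_sum_inv_zero p hp (a + b) (by omega) (by omega)
  rw [hPa, zero_mul, hPab, add_zero, ← hrefl] at hsplit
  have h2 : (2 : ZMod p) * S a b = 0 := by linear_combination -hsplit
  have h2ne : (2 : ZMod p) ≠ 0 := by
    have := (ZMod.natCast_eq_zero_iff 2 p).not
    intro h
    have : (p : ℕ) ∣ 2 := (ZMod.natCast_eq_zero_iff 2 p).1 (by exact_mod_cast h)
    have := Nat.le_of_dvd (by norm_num) this
    omega
  have := mul_eq_zero.1 h2
  rcases this with h | h
  · exact absurd h h2ne
  · exact h
end

section
/- For every prime p > 3, the identity \sum_{0<l_1,l_2<p, l_1+l_2 \ne p} t^{l_1+l_2}/(l_1(l_1+l_2)) = (1/2) (\sum_{0<l<p} t^l/l)^2 holds in (ZMod p)[t]. -/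
open Polynomial Finset

/-- The finite polylogarithm £₁(t) = ∑_{0<l<p} l⁻¹ tˡ in (ZMod p)[t]. -/
noncomputable def L1 (p : ℕ) : Polynomial (ZMod p) :=
  ∑ l ∈ Ico 1 p, C ((l : ZMod p)⁻¹) * X ^ l

/-- The finite multiple polylogarithm of Ono–Yamamoto type £^OY_{(1,1)}(t). -/
noncomputable def OY11 (p : ℕ) : Polynomial (ZMod p) :=
  ∑ l1 ∈ Ico 1 p, ∑ l2 ∈ Ico 1 p,
    if ¬ p ∣ (l1 + l2) then
      C ((l1 : ZMod p)⁻¹ * ((l1 + l2 : ℕ) : ZMod p)⁻¹) * X ^ (l1 + l2)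
    else 0

lemma sum_cast (p : ℕ) [NeZero p] (f : ZMod p → ZMod p) :
    ∑ l ∈ range p, f (l : ZMod p) = ∑ x : ZMod p, f x := by
  refine Finset.sum_nbij' (fun l => (l : ZMod p)) (fun x => x.val) ?_ ?_ ?_ ?_ ?_
  · intro l _; exact mem_univ _
  · intro x _; exact mem_range.2 (ZMod.val_lt x)
  · intro l hl; exact ZMod.val_cast_of_lt (mem_range.1 hl)
  · intro x _; exact ZMod.natCast_zmod_val x
  · intro l _; rfl

lemma sum_inv_sq (p : ℕ) (hp : p.Prime) (h3 : 3 < p) :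
    ∑ l ∈ Ico 1 p, ((l : ZMod p)⁻¹)^2 = 0 := by
  haveI : Fact p.Prime := ⟨hp⟩
  have h0 : ∑ l ∈ Ico 1 p, ((l : ZMod p)⁻¹)^2 = ∑ l ∈ range p, ((l : ZMod p)⁻¹)^2 := by
    rw [range_eq_Ico, Finset.sum_eq_sum_Ico_succ_bot (by omega : 0 < p)]
    simp
  rw [h0, sum_cast p (fun x => (x⁻¹)^2)]
  have h1 : ∑ x : ZMod p, (x⁻¹)^2 = ∑ x : ZMod p, x^2 :=
    Fintype.sum_equiv (Equiv.inv (ZMod p)) _ _ (fun x => rfl)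
  rw [h1]
  exact FiniteField.sum_pow_lt_card_sub_one (ZMod p) 2 (by rw [ZMod.card]; omega)

theorem OY11_eq_half_L1_sq (p : ℕ) (hp : p.Prime) (h3 : 3 < p) :
    OY11 p = C ((2 : ZMod p)⁻¹) * (L1 p) ^ 2 := by
  haveI : Fact p.Prime := ⟨hp⟩
  have hcast : ∀ l ∈ Ico 1 p, ((l : ℕ) : ZMod p) ≠ 0 := by
    intro l hl h
    rw [ZMod.natCast_eq_zero_iff] at h
    rw [mem_Ico] at hl
    have := Nat.le_of_dvd (by omega) h
    omega
  have expand : L1 p ^ 2 = ∑ l1 ∈ Ico 1 p, ∑ l2 ∈ Ico 1 p,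
      C ((l1 : ZMod p)⁻¹ * (l2 : ZMod p)⁻¹) * X ^ (l1 + l2) := by
    rw [sq, L1, Finset.sum_mul_sum]
    refine Finset.sum_congr rfl fun l1 _ => Finset.sum_congr rfl fun l2 _ => ?_
    rw [mul_mul_mul_comm, ← C_mul, ← pow_add]
  have split : ∀ l1 ∈ Ico 1 p, ∀ l2 ∈ Ico 1 p,
      C ((l1 : ZMod p)⁻¹ * (l2 : ZMod p)⁻¹) * X ^ (l1 + l2) =
      (if ¬ p ∣ (l1 + l2) then
        C ((l1 : ZMod p)⁻¹ * ((l1 + l2 : ℕ) : ZMod p)⁻¹) * X ^ (l1 + l2) else 0)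
      + (if ¬ p ∣ (l2 + l1) then
        C ((l2 : ZMod p)⁻¹ * ((l2 + l1 : ℕ) : ZMod p)⁻¹) * X ^ (l2 + l1) else 0)
      + (if p ∣ (l1 + l2) then
        C ((l1 : ZMod p)⁻¹ * (l2 : ZMod p)⁻¹) * X ^ (l1 + l2) else 0) := by
    intro l1 hl1 l2 hl2
    by_cases h : p ∣ l1 + l2
    · rw [if_neg (not_not.2 h), if_neg (not_not.2 (by rwa [Nat.add_comm l2 l1])),
        if_pos h, zero_add, zero_add]
    · rw [if_pos h, if_pos (by rwa [Nat.add_comm l2 l1]), if_neg h, add_zero,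
        Nat.add_comm l2 l1, ← add_mul, ← C_add]
      have hn : ((l1 + l2 : ℕ) : ZMod p) ≠ 0 := by
        intro h0; exact h ((ZMod.natCast_eq_zero_iff _ _).1 h0)
      have h1 := hcast l1 hl1
      have h2 := hcast l2 hl2
      congr 1
      have hadd : ((l1 + l2 : ℕ) : ZMod p) = (l1 : ZMod p) + (l2 : ZMod p) := by push_cast; ring
      rw [hadd] at hn ⊢
      apply congrArg C
      field_simp
      ring
  have hB : ∑ l1 ∈ Ico 1 p, ∑ l2 ∈ Ico 1 p,
      (if p ∣ (l1 + l2) then C ((l1 : ZMod p)⁻¹ * (l2 : ZMod p)⁻¹) * X ^ (l1 + l2) else 0)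
      = 0 := by
    have inner : ∀ l1 ∈ Ico 1 p,
        (∑ l2 ∈ Ico 1 p, if p ∣ (l1 + l2) then
          C ((l1 : ZMod p)⁻¹ * (l2 : ZMod p)⁻¹) * X ^ (l1 + l2) else 0)
        = C (-(((l1 : ZMod p))⁻¹ ^ 2)) * X ^ p := by
      intro l1 hl1
      rw [mem_Ico] at hl1
      rw [Finset.sum_eq_single_of_mem (p - l1) (mem_Ico.2 ⟨by omega, by omega⟩)]
      · have he : l1 + (p - l1) = p := by omega
        rw [he, if_pos (dvd_refl p)]
        congr 1
        have hneg : ((p - l1 : ℕ) : ZMod p) = -(l1 : ZMod p) := by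
          rw [Nat.cast_sub (le_of_lt hl1.2), ZMod.natCast_self, zero_sub]
        rw [hneg, inv_neg]
        ring
      · intro l2 hl2 hne
        rw [mem_Ico] at hl2
        rw [if_neg]
        intro hdvd
        obtain ⟨k, hk⟩ := hdvd
        have hk0 : k ≠ 0 := by rintro rfl; omega
        have hk2 : k < 2 := by
          by_contra hc
          push_neg at hc
          have : p * 2 ≤ p * k := Nat.mul_le_mul_left p hc
          omega
        have : k = 1 := by omega
        subst this
        omega
    rw [Finset.sum_congr rfl inner, ← Finset.sum_mul, ← map_sum]
    have hz : ∑ x ∈ Ico 1 p, -(((x : ZMod p))⁻¹ ^ 2) = 0 := by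
      rw [Finset.sum_neg_distrib, sum_inv_sq p hp h3, neg_zero]
    rw [hz, map_zero, zero_mul]
  have key : L1 p ^ 2 = OY11 p + OY11 p := by
    rw [expand, Finset.sum_congr rfl (fun l1 hl1 => Finset.sum_congr rfl (split l1 hl1))]
    simp only [Finset.sum_add_distrib]
    rw [hB, add_zero, Finset.sum_comm (s := Ico 1 p) (t := Ico 1 p)
      (f := fun l1 l2 => if ¬ p ∣ (l2 + l1) then
        C ((l2 : ZMod p)⁻¹ * ((l2 + l1 : ℕ) : ZMod p)⁻¹) * X ^ (l2 + l1) else 0)]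
    rfl
  have h2ne : (2 : ZMod p) ≠ 0 := by
    intro h
    have : ((2 : ℕ) : ZMod p) = 0 := by push_cast; exact h
    rw [ZMod.natCast_eq_zero_iff] at this
    have := Nat.le_of_dvd (by omega) this
    omega
  have h2 : L1 p ^ 2 = C (2 : ZMod p) * OY11 p := by
    rw [key, show (C (2 : ZMod p)) = 2 from map_ofNat C 2, two_mul]
  rw [h2, ← mul_assoc, ← C_mul, inv_mul_cancel₀ h2ne, C_1, one_mul]
end

section
/- For every prime p > 3, the polynomial identity \sum_{0<l_1,l_2<p, p \nmid l_1+l_2} t^{l_1+l_2}/(l_1(l_1+l_2)) = \sum_{0<l_1,l_2<p, p \nmid l_1+l_2} (1-t)^{l_1+l_2}/(l_1(l_1+l_2)) holds in (ZMod p)[t]. -/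
open Polynomial Finset

namespace OY11aux

variable {p : ℕ}

lemma cast_ne_zero (hp : p.Prime) {l : ℕ} (h1 : 1 ≤ l) (h2 : l < p) :
    (l : ZMod p) ≠ 0 := by
  rw [Ne, ZMod.natCast_eq_zero_iff]
  intro hdvd
  have := Nat.le_of_dvd (by omega) hdvd
  omega

lemma sum_sq_inv (hp : p.Prime) (h3 : 3 < p) :
    ∑ l ∈ Ico 1 p, ((l : ZMod p)⁻¹) ^ 2 = 0 := by
  haveI : Fact p.Prime := ⟨hp⟩
  haveI : NeZero p := ⟨by omega⟩
  have h1 : ∑ l ∈ Ico 1 p, ((l : ZMod p)⁻¹) ^ 2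
      = ∑ x ∈ (univ : Finset (ZMod p)).erase 0, (x⁻¹) ^ 2 := by
    refine Finset.sum_nbij' (fun l => (l : ZMod p)) (fun x => x.val) ?_ ?_ ?_ ?_ ?_
    · intro l hl
      simp only [mem_Ico] at hl
      simp [Finset.mem_erase, cast_ne_zero hp hl.1 hl.2]
    · intro x hx
      simp only [Finset.mem_erase, Finset.mem_univ, and_true] at hx
      simp only [mem_Ico]
      constructor
      · have : x.val ≠ 0 := by
          simpa [ZMod.val_eq_zero] using hx
        omega
      · exact ZMod.val_lt x
    · intro l hl
      simp only [mem_Ico] at hl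
      exact ZMod.val_cast_of_lt hl.2
    · intro x hx
      simp [ZMod.natCast_val, ZMod.cast_id]
    · intro l hl; rfl
  have h2 : ∑ x ∈ (univ : Finset (ZMod p)).erase 0, (x⁻¹) ^ 2
      = ∑ x : ZMod p, (x⁻¹) ^ 2 :=
    Finset.sum_erase _ (by simp)
  have h4 : ∑ x : ZMod p, (x⁻¹) ^ 2 = ∑ x : ZMod p, x ^ 2 := by
    refine (Fintype.sum_bijective (fun x : ZMod p => x⁻¹)
      inv_involutive.bijective _ _ ?_).symm
    intro x; simp
  have h5 : ∑ x : ZMod p, x ^ 2 = 0 :=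
    FiniteField.sum_pow_lt_card_sub_one (ZMod p) 2 (by rw [ZMod.card]; omega)
  rw [h1, h2, h4, h5]

lemma two_mul_sum (hp : p.Prime) (h3 : 3 < p) (q : (ZMod p)[X]) :
    2 * (∑ l1 ∈ Ico 1 p, ∑ l2 ∈ Ico 1 p,
      if ¬ p ∣ (l1 + l2) then
        C ((l1 : ZMod p)⁻¹ * ((l1 + l2 : ℕ) : ZMod p)⁻¹) * q ^ (l1 + l2)
      else 0)
    = (∑ l ∈ Ico 1 p, C ((l : ZMod p)⁻¹) * q ^ l) ^ 2 := by
  haveI : Fact p.Prime := ⟨hp⟩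
  rw [two_mul]
  nth_rewrite 2 [Finset.sum_comm]
  rw [← Finset.sum_add_distrib]
  have key : ∀ l1 ∈ Ico 1 p, ∀ l2 ∈ Ico 1 p,
      ((if ¬ p ∣ (l1 + l2) then
        C ((l1 : ZMod p)⁻¹ * ((l1 + l2 : ℕ) : ZMod p)⁻¹) * q ^ (l1 + l2) else 0)
      + (if ¬ p ∣ (l2 + l1) then
        C ((l2 : ZMod p)⁻¹ * ((l2 + l1 : ℕ) : ZMod p)⁻¹) * q ^ (l2 + l1) else 0))
      = (C ((l1 : ZMod p)⁻¹) * q ^ l1) * (C ((l2 : ZMod p)⁻¹) * q ^ l2)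
        - (if p ∣ (l1 + l2) then
            (C ((l1 : ZMod p)⁻¹) * q ^ l1) * (C ((l2 : ZMod p)⁻¹) * q ^ l2) else 0) := by
    intro l1 hl1 l2 hl2
    simp only [mem_Ico] at hl1 hl2
    by_cases hc : p ∣ (l1 + l2)
    · have hc' : p ∣ (l2 + l1) := by rwa [Nat.add_comm]
      simp [hc, hc']
    · have hc' : ¬ p ∣ (l2 + l1) := by rwa [Nat.add_comm]
      rw [if_pos hc, if_pos hc', if_neg hc, sub_zero]
      have ha : (l1 : ZMod p) ≠ 0 := cast_ne_zero hp hl1.1 hl1.2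
      have hb : (l2 : ZMod p) ≠ 0 := cast_ne_zero hp hl2.1 hl2.2
      have hab : ((l1 + l2 : ℕ) : ZMod p) ≠ 0 := by
        rw [Ne, ZMod.natCast_eq_zero_iff]; exact hc
      have hab' : (l1 : ZMod p) + (l2 : ZMod p) ≠ 0 := by
        rwa [← Nat.cast_add]
      have hfield : (l1 : ZMod p)⁻¹ * ((l1 : ZMod p) + l2)⁻¹
          + (l2 : ZMod p)⁻¹ * ((l1 : ZMod p) + l2)⁻¹
          = (l1 : ZMod p)⁻¹ * (l2 : ZMod p)⁻¹ := by
        field_simp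
        ring
      have hcast : ((l1 + l2 : ℕ) : ZMod p) = (l1 : ZMod p) + l2 := by push_cast; ring
      have hcast' : ((l2 + l1 : ℕ) : ZMod p) = (l1 : ZMod p) + l2 := by push_cast; ring
      rw [hcast, hcast', Nat.add_comm l2 l1, ← add_mul, ← C_add, hfield]
      rw [pow_add, C_mul]
      ring
  refine Eq.trans (Finset.sum_congr rfl (fun l1 hl1 =>
    Finset.sum_add_distrib.symm.trans
      (Finset.sum_congr rfl (fun l2 hl2 => key l1 hl1 l2 hl2)))) ?_
  simp only [Finset.sum_sub_distrib]
  have hdiag : ∑ l1 ∈ Ico 1 p, ∑ l2 ∈ Ico 1 p,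
      (if p ∣ (l1 + l2) then
        (C ((l1 : ZMod p)⁻¹) * q ^ l1) * (C ((l2 : ZMod p)⁻¹) * q ^ l2) else 0) = 0 := by
    have hinner : ∀ l1 ∈ Ico 1 p, ∑ l2 ∈ Ico 1 p,
        (if p ∣ (l1 + l2) then
          (C ((l1 : ZMod p)⁻¹) * q ^ l1) * (C ((l2 : ZMod p)⁻¹) * q ^ l2) else 0)
        = C ((l1 : ZMod p)⁻¹ * (((p - l1 : ℕ) : ZMod p))⁻¹) * q ^ p := by
      intro l1 hl1
      simp only [mem_Ico] at hl1
      rw [Finset.sum_eq_single_of_mem (p - l1)]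
      · have hdvd : p ∣ (l1 + (p - l1)) := by
          have : l1 + (p - l1) = p := by omega
          rw [this]
        rw [if_pos hdvd]
        have hexp : l1 + (p - l1) = p := by omega
        rw [C_mul]
        calc C ((l1 : ZMod p)⁻¹) * q ^ l1 * (C (((p - l1 : ℕ) : ZMod p))⁻¹ * q ^ (p - l1))
            = C ((l1 : ZMod p)⁻¹) * C (((p - l1 : ℕ) : ZMod p))⁻¹ * q ^ (l1 + (p - l1)) := by
              rw [pow_add]; ring
          _ = C ((l1 : ZMod p)⁻¹) * C (((p - l1 : ℕ) : ZMod p))⁻¹ * q ^ p := by rw [hexp]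
      · simp only [mem_Ico]; omega
      · intro l2 hl2 hne
        simp only [mem_Ico] at hl2
        rw [if_neg]
        rintro ⟨k, hk⟩
        match k, hk with
        | 0, hk => omega
        | 1, hk => exact hne (by omega)
        | (k+2), hk =>
          have h2p : p * 2 ≤ p * (k + 2) := Nat.mul_le_mul_left p (by omega)
          omega
    rw [Finset.sum_congr rfl hinner, ← Finset.sum_mul, ← map_sum]
    have : ∑ l1 ∈ Ico 1 p, (l1 : ZMod p)⁻¹ * (((p - l1 : ℕ) : ZMod p))⁻¹ = 0 := by
      have hterm : ∀ l1 ∈ Ico 1 p,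
          (l1 : ZMod p)⁻¹ * (((p - l1 : ℕ) : ZMod p))⁻¹ = -((l1 : ZMod p)⁻¹) ^ 2 := by
        intro l1 hl1
        simp only [mem_Ico] at hl1
        have : ((p - l1 : ℕ) : ZMod p) = -(l1 : ZMod p) := by
          rw [Nat.cast_sub hl1.2.le, ZMod.natCast_self, zero_sub]
        rw [this, inv_neg]
        ring
      rw [Finset.sum_congr rfl hterm, Finset.sum_neg_distrib, sum_sq_inv hp h3, neg_zero]
    rw [this, C_0, zero_mul]
  rw [hdiag, sub_zero, sq, Finset.sum_mul_sum]

lemma geom_flip (hp : p.Prime) (h3 : 3 < p) :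
    (∑ k ∈ range (p - 1), (1 - X : (ZMod p)[X]) ^ k)
      = -(∑ k ∈ range (p - 1), (X : (ZMod p)[X]) ^ k) := by
  haveI : Fact p.Prime := ⟨hp⟩
  have hsucc : p - 1 + 1 = p := by omega
  have g1 : (∑ k ∈ range (p - 1), (X : (ZMod p)[X]) ^ k) * (X - 1) * X
      = X ^ p - X := by
    rw [geom_sum_mul, sub_mul, one_mul, ← pow_succ, hsucc]
  have g2 : (∑ k ∈ range (p - 1), (1 - X : (ZMod p)[X]) ^ k) * ((1 - X) - 1) * (1 - X)
      = (1 - X) ^ p - (1 - X) := by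
    rw [geom_sum_mul, sub_mul, one_mul, ← pow_succ, hsucc]
  have hfrob : ((1 : (ZMod p)[X]) - X) ^ p = 1 - X ^ p := by
    rw [sub_pow_char, one_pow]
  rw [hfrob] at g2
  have hcancel : (X * (X - 1)) *
      ((∑ k ∈ range (p - 1), (X : (ZMod p)[X]) ^ k)
        + (∑ k ∈ range (p - 1), (1 - X : (ZMod p)[X]) ^ k)) = 0 := by
    linear_combination g1 + g2
  have hXne : (X : (ZMod p)[X]) ≠ 0 := X_ne_zero
  have hX1ne : (X - 1 : (ZMod p)[X]) ≠ 0 := by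
    have := X_sub_C_ne_zero (R := ZMod p) 1
    simpa using this
  have hne : (X * (X - 1) : (ZMod p)[X]) ≠ 0 := mul_ne_zero hXne hX1ne
  have := (mul_eq_zero.mp hcancel).resolve_left hne
  linear_combination this

lemma L_comp (hp : p.Prime) (h3 : 3 < p) :
    (∑ l ∈ Ico 1 p, C ((l : ZMod p)⁻¹) * X ^ l).comp (1 - X)
      = ∑ l ∈ Ico 1 p, C ((l : ZMod p)⁻¹) * X ^ l := by
  haveI : Fact p.Prime := ⟨hp⟩
  set L : (ZMod p)[X] := ∑ l ∈ Ico 1 p, C ((l : ZMod p)⁻¹) * X ^ l with hL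
  set D : (ZMod p)[X] := L.comp (1 - X) - L with hD
  have hderivL : derivative L = ∑ k ∈ range (p - 1), (X : (ZMod p)[X]) ^ k := by
    rw [hL, derivative_sum]
    have : ∀ l ∈ Ico 1 p,
        derivative (C ((l : ZMod p)⁻¹) * X ^ l) = X ^ (l - 1) := by
      intro l hl
      simp only [mem_Ico] at hl
      rw [derivative_C_mul, derivative_X_pow, ← mul_assoc, ← C_mul,
        inv_mul_cancel₀ (cast_ne_zero hp hl.1 hl.2), C_1, one_mul]
    rw [Finset.sum_congr rfl this, Finset.sum_Ico_eq_sum_range]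
    exact Finset.sum_congr rfl (fun k _ => by congr 1; omega)
  have hderivD : derivative D = 0 := by
    rw [hD, derivative_sub, derivative_comp, hderivL]
    have hcomp : (∑ k ∈ range (p - 1), (X : (ZMod p)[X]) ^ k).comp (1 - X)
        = ∑ k ∈ range (p - 1), (1 - X : (ZMod p)[X]) ^ k := by
      simp
    rw [hcomp, geom_flip hp h3]
    simp
  have hdegL : L.natDegree ≤ p - 1 := by
    refine Polynomial.natDegree_sum_le_of_forall_le _ _ ?_
    intro l hl
    simp only [mem_Ico] at hl
    refine (natDegree_C_mul_le _ _).trans ?_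
    rw [natDegree_X_pow]; omega
  have hdegD : D.natDegree ≤ p - 1 := by
    refine (natDegree_sub_le _ _).trans ?_
    refine max_le ?_ hdegL
    refine (natDegree_comp_le).trans ?_
    have h1X : (1 - X : (ZMod p)[X]).natDegree ≤ 1 := by
      refine (natDegree_sub_le _ _).trans ?_
      simp
    calc L.natDegree * (1 - X : (ZMod p)[X]).natDegree ≤ L.natDegree * 1 :=
          Nat.mul_le_mul_left _ h1X
      _ = L.natDegree := Nat.mul_one _
      _ ≤ p - 1 := hdegL
  have hcoeff : ∀ n, 1 ≤ n → D.coeff n = 0 := by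
    intro n hn
    by_cases hnp : n < p
    · obtain ⟨m, rfl⟩ : ∃ m, n = m + 1 := ⟨n - 1, by omega⟩
      have := congrArg (fun f => Polynomial.coeff f m) hderivD
      simp only [coeff_derivative, coeff_zero] at this
      have hm : ((m : ZMod p) + 1) ≠ 0 := by
        have : (((m + 1 : ℕ)) : ZMod p) ≠ 0 := cast_ne_zero hp (by omega) hnp
        push_cast at this
        exact this
      exact (mul_eq_zero.mp this).resolve_right hm
    · exact coeff_eq_zero_of_natDegree_lt (by omega)
  have hDC : D = C (D.coeff 0) := by
    ext n
    rcases Nat.eq_zero_or_pos n with h0 | h0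
    · subst h0; simp
    · rw [hcoeff n h0, coeff_C, if_neg (by omega)]
  have hDcomp : D.comp (1 - X) = -D := by
    rw [hD, sub_comp, comp_assoc]
    have : ((1 - X : (ZMod p)[X])).comp (1 - X) = X := by
      simp [sub_comp]
    rw [this, comp_X]
    ring
  have h2ne : (2 : ZMod p) ≠ 0 := by
    have : ((2 : ℕ) : ZMod p) ≠ 0 := by
      rw [Ne, ZMod.natCast_eq_zero_iff]
      intro h
      have := Nat.le_of_dvd (by omega) h
      omega
    push_cast at this
    exact this
  have hDzero : D = 0 := by
    rw [hDC] at hDcomp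
    rw [C_comp] at hDcomp
    have hc' : D.coeff 0 = - D.coeff 0 := by
      have := congrArg (fun f => Polynomial.coeff f 0) hDcomp
      simpa using this
    have hc0 : D.coeff 0 = 0 := by
      have h2c : (2 : ZMod p) * D.coeff 0 = 0 := by linear_combination hc'
      rcases mul_eq_zero.mp h2c with h | h
      · exact absurd h h2ne
      · exact h
    rw [hDC, hc0, C_0]
  have := sub_eq_zero.mp hDzero
  exact this

end OY11aux

open OY11aux in
theorem OY11_functional_equation (p : ℕ) (hp : p.Prime) (h3 : 3 < p) :
    (∑ l1 ∈ Ico 1 p, ∑ l2 ∈ Ico 1 p,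
      if ¬ p ∣ (l1 + l2) then
        C ((l1 : ZMod p)⁻¹ * ((l1 + l2 : ℕ) : ZMod p)⁻¹) * X ^ (l1 + l2)
      else 0)
    = ∑ l1 ∈ Ico 1 p, ∑ l2 ∈ Ico 1 p,
      if ¬ p ∣ (l1 + l2) then
        C ((l1 : ZMod p)⁻¹ * ((l1 + l2 : ℕ) : ZMod p)⁻¹) * (1 - X) ^ (l1 + l2)
      else 0 := by
  haveI : Fact p.Prime := ⟨hp⟩
  have h2ne : (2 : (ZMod p)[X]) ≠ 0 := by
    have h2 : (2 : ZMod p) ≠ 0 := by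
      have : ((2 : ℕ) : ZMod p) ≠ 0 := by
        rw [Ne, ZMod.natCast_eq_zero_iff]
        intro h
        have := Nat.le_of_dvd (by omega) h
        omega
      push_cast at this
      exact this
    rw [(map_ofNat C 2).symm]
    exact fun h => h2 ((map_eq_zero_iff C C_injective).mp h)
  refine mul_left_cancel₀ h2ne ?_
  rw [two_mul_sum hp h3 X, two_mul_sum hp h3 (1 - X)]
  have hsum : ∑ l ∈ Ico 1 p, C ((l : ZMod p)⁻¹) * (1 - X : (ZMod p)[X]) ^ l
      = (∑ l ∈ Ico 1 p, C ((l : ZMod p)⁻¹) * X ^ l).comp (1 - X) := by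
    simp [Polynomial.comp, Polynomial.eval₂_finset_sum]
  rw [hsum, L_comp hp h3]
end

section
/- For every prime p > 3, the polynomial identity £^{OY}_{(1,1,1)}(t) = £^{OY}_{(1,1,1)}(1-t) holds in (ZMod p)[t], where £^{OY}_{(1,1,1)}(t) = \sum' t^{l_1+l_2+l_3}/(l_1(l_1+l_2)(l_1+l_2+l_3)). -/
set_option linter.unusedSectionVars false
open Polynomial Finset

variable {p : ℕ} [hpf : Fact p.Prime]

lemma dvd_iff_eq_p (h3 : 3 < p) {m : ℕ} (h0 : 0 < m) (h2 : m < 2 * p) : p ∣ m ↔ m = p := by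
  constructor
  · rintro ⟨k, rfl⟩
    have hk2 : k < 2 := by
      by_contra h
      push_neg at h
      have : p * 2 ≤ p * k := Nat.mul_le_mul_left p h
      omega
    interval_cases k <;> omega
  · rintro rfl; exact dvd_rfl

lemma dvd_cases3 (h3 : 3 < p) {m : ℕ} (h0 : 0 < m) (h2 : m < 3 * p) (h : p ∣ m) :
    m = p ∨ m = 2 * p := by
  obtain ⟨k, rfl⟩ := h
  have hk3 : k < 3 := by
    by_contra h
    push_neg at h
    have : p * 3 ≤ p * k := Nat.mul_le_mul_left p h
    omega
  interval_cases k <;> omega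

lemma cast_ne_zero_of_not_dvd {m : ℕ} (h : ¬ p ∣ m) : ((m : ZMod p)) ≠ 0 := by
  rwa [Ne, ZMod.natCast_eq_zero_iff]

lemma not_dvd_of_mem {l : ℕ} (hl : l ∈ Ico 1 p) : ¬ p ∣ l := by
  simp only [mem_Ico] at hl
  intro h
  have := Nat.le_of_dvd (by omega) h
  omega

lemma cast_mem_ne_zero {l : ℕ} (hl : l ∈ Ico 1 p) : ((l : ZMod p)) ≠ 0 :=
  cast_ne_zero_of_not_dvd (not_dvd_of_mem hl)

lemma cast_p_sub {a : ℕ} (h : a ≤ p) : (((p - a : ℕ) : ZMod p)) = -(a : ZMod p) := by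
  have : ((p - a : ℕ) : ZMod p) = (p : ZMod p) - (a : ZMod p) := by
    push_cast [h]; ring
  rw [this, ZMod.natCast_self]; ring

lemma sum_inv_eq_zero (h3 : 3 < p) : ∑ l ∈ Ico 1 p, ((l : ZMod p))⁻¹ = 0 := by
  have key : ∑ l ∈ Ico 1 p, ((l : ZMod p))⁻¹ = ∑ l ∈ Ico 1 p, (-((l : ZMod p)))⁻¹ := by
    apply Finset.sum_nbij' (fun l => p - l) (fun l => p - l) <;>
      intro a ha <;> simp only [mem_Ico] at * <;> try omega
    rw [cast_p_sub (by omega : a ≤ p)]; simp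
  have h2 : (2 : ZMod p) ≠ 0 := by
    have : ¬ p ∣ 2 := by intro h; have := Nat.le_of_dvd (by norm_num) h; omega
    simpa using cast_ne_zero_of_not_dvd this
  have : (2 : ZMod p) * ∑ l ∈ Ico 1 p, ((l : ZMod p))⁻¹ = 0 := by
    rw [two_mul]
    nth_rewrite 2 [key]
    rw [← Finset.sum_add_distrib]
    apply Finset.sum_eq_zero
    intro l hl
    simp [inv_neg]
  exact (mul_eq_zero.mp this).resolve_left h2

variable {p : ℕ} [hpf : Fact p.Prime]

lemma sum_Ico_cast (f : ZMod p → ZMod p) :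
    ∑ l ∈ Ico 1 p, f (l : ZMod p) = ∑ x ∈ (univ : Finset (ZMod p)).erase 0, f x := by
  haveI : NeZero p := ⟨hpf.out.pos.ne'⟩
  refine Finset.sum_nbij' (i := fun l => ((l : ZMod p))) (j := fun x => x.val) ?_ ?_ ?_ ?_ ?_
  · intro a ha
    simp only [mem_Ico] at ha
    simp only [mem_erase, mem_univ, and_true]
    rw [Ne, ZMod.natCast_eq_zero_iff]
    intro h; have := Nat.le_of_dvd (by omega) h; omega
  · intro x hx
    simp only [mem_erase, mem_univ, and_true] at hx
    simp only [mem_Ico]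
    exact ⟨Nat.one_le_iff_ne_zero.mpr (fun h => hx (by rwa [← ZMod.val_eq_zero])), ZMod.val_lt x⟩
  · intro a ha
    simp only [mem_Ico] at ha
    exact ZMod.val_cast_of_lt ha.2
  · intro x hx
    simp [ZMod.natCast_val, ZMod.cast_id]
  · intros; rfl

lemma sum_inv_sq_eq_zero (h3 : 3 < p) :
    ∑ l ∈ Ico 1 p, ((l : ZMod p))⁻¹ * ((l : ZMod p))⁻¹ = 0 := by
  have h2 : (2 : ZMod p) ≠ 0 := by
    have : ¬ p ∣ 2 := by intro h; have := Nat.le_of_dvd (by norm_num) h; omega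
    simpa using (fun hh => this ((ZMod.natCast_eq_zero_iff 2 p).mp (by exact_mod_cast hh)))
  have h3' : (3 : ZMod p) ≠ 0 := by
    have : ¬ p ∣ 3 := by intro h; have := Nat.le_of_dvd (by norm_num) h; omega
    simpa using (fun hh => this ((ZMod.natCast_eq_zero_iff 3 p).mp (by exact_mod_cast hh)))
  rw [sum_Ico_cast (fun x => x⁻¹ * x⁻¹)]
  set S := ∑ x ∈ (univ : Finset (ZMod p)).erase 0, x⁻¹ * x⁻¹ with hS
  have key : S = (2 * 2 : ZMod p)⁻¹ * S := by
    rw [hS, Finset.mul_sum]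
    refine Finset.sum_nbij' (i := fun x => 2⁻¹ * x) (j := fun x => 2 * x) ?_ ?_ ?_ ?_ ?_
    · intro a ha
      simp only [mem_erase, mem_univ, and_true] at *
      exact mul_ne_zero (inv_ne_zero h2) ha
    · intro a ha
      simp only [mem_erase, mem_univ, and_true] at *
      exact mul_ne_zero h2 ha
    · intro a _; field_simp
    · intro a _; field_simp
    · intro a ha
      simp only [mem_erase, mem_univ, and_true] at ha
      field_simp
  have h4 : (1 - (2 * 2 : ZMod p)⁻¹) ≠ 0 := by
    intro h
    have h4' : (2 * 2 : ZMod p) ≠ 0 := mul_ne_zero h2 h2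
    have h5 : ((2 * 2 : ZMod p))⁻¹ = 1 := by linear_combination -h
    have h6 := mul_inv_cancel₀ h4'
    rw [h5, mul_one] at h6
    exact h3' (by linear_combination h6)
  have : (1 - (2 * 2 : ZMod p)⁻¹) * S = 0 := by
    rw [sub_mul, one_mul]
    nth_rewrite 1 [key]
    ring
  exact (mul_eq_zero.mp this).resolve_left h4

noncomputable def Lpoly (p : ℕ) : Polynomial (ZMod p) :=
  ∑ l ∈ Ico 1 p, C ((l : ZMod p))⁻¹ * X ^ l

lemma derivative_Lpoly :
    derivative (Lpoly p) = ∑ j ∈ range (p - 1), (X : Polynomial (ZMod p)) ^ j := by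
  rw [Lpoly, map_sum]
  rw [Finset.sum_Ico_eq_sum_range]
  apply Finset.sum_congr rfl
  intro j hj
  simp only [mem_range] at hj
  rw [derivative_C_mul_X_pow]
  have h1 : ((1 + j : ℕ) : ZMod p) ≠ 0 := by
    rw [Ne, ZMod.natCast_eq_zero_iff]
    intro h; have := Nat.le_of_dvd (by omega) h; omega
  have : ((1 + j : ℕ) : ZMod p)⁻¹ * ((1 + j : ℕ) : ZMod p) = 1 := inv_mul_cancel₀ h1
  push_cast at this ⊢
  rw [this, map_one, one_mul]
  congr 1
  omega

lemma one_sub_X_pow_char : (1 - X : Polynomial (ZMod p)) ^ p = 1 - X ^ p := by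
  haveI : CharP (Polynomial (ZMod p)) p := inferInstance
  rw [sub_pow_char]
  simp

lemma geom_comp_one_sub :
    (∑ j ∈ range (p - 1), (X : Polynomial (ZMod p)) ^ j).comp (1 - X)
      = -∑ j ∈ range (p - 1), (X : Polynomial (ZMod p)) ^ j := by
  have hXne : (X : Polynomial (ZMod p)) ≠ 0 := X_ne_zero
  have hX1ne : (X : Polynomial (ZMod p)) - 1 ≠ 0 := by
    rw [← map_one C]; exact X_sub_C_ne_zero 1
  have hMne : (-(X : Polynomial (ZMod p))) * (X - 1) ≠ 0 :=
    mul_ne_zero (neg_ne_zero.mpr hXne) hX1ne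
  apply mul_right_cancel₀ hMne
  have hE : (∑ j ∈ range (p - 1), (X : Polynomial (ZMod p)) ^ j).comp (1 - X)
      = ∑ j ∈ range (p - 1), (1 - X : Polynomial (ZMod p)) ^ j := by
    simp [Polynomial.eval₂_finset_sum, Polynomial.comp]
  rw [hE]
  have hg1 := geom_sum_mul (1 - X : Polynomial (ZMod p)) (p - 1)
  have hg2 := geom_sum_mul (X : Polynomial (ZMod p)) (p - 1)
  have hsucc : p - 1 + 1 = p := by have := hpf.out.pos; omega
  have hpow : (1 - X : Polynomial (ZMod p)) ^ (p - 1) * (1 - X) = 1 - X ^ p := by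
    rw [← pow_succ, hsucc, one_sub_X_pow_char]
  have hpow2 : (X : Polynomial (ZMod p)) ^ (p - 1) * X = X ^ p := by
    rw [← pow_succ, hsucc]
  calc (∑ j ∈ range (p - 1), (1 - X : Polynomial (ZMod p)) ^ j) * (-X * (X - 1))
      = ((∑ j ∈ range (p - 1), (1 - X : Polynomial (ZMod p)) ^ j) * ((1 - X) - 1)) * (X - 1) := by
        ring
    _ = ((1 - X) ^ (p - 1) - 1) * (X - 1) := by rw [hg1]
    _ = -((1 - X) ^ (p - 1) * (1 - X)) - X + 1 := by ring
    _ = -(1 - X ^ p) - X + 1 := by rw [hpow]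
    _ = X ^ (p - 1) * X - X := by rw [hpow2]; ring
    _ = ((∑ j ∈ range (p - 1), (X : Polynomial (ZMod p)) ^ j) * (X - 1)) * X := by
        rw [hg2]; ring
    _ = (-∑ j ∈ range (p - 1), (X : Polynomial (ZMod p)) ^ j) * (-X * (X - 1)) := by ring

lemma Lpoly_eval_one (h3 : 3 < p) : (Lpoly p).eval 1 = 0 := by
  rw [Lpoly, eval_finset_sum]
  simp only [eval_mul, eval_C, eval_pow, eval_X, one_pow, mul_one]
  exact sum_inv_eq_zero h3

lemma Lpoly_eval_zero : (Lpoly p).eval 0 = 0 := by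
  rw [Lpoly, eval_finset_sum]
  apply Finset.sum_eq_zero
  intro l hl
  simp only [mem_Ico] at hl
  simp [zero_pow (by omega : l ≠ 0)]

lemma natDegree_Lpoly_le : (Lpoly p).natDegree ≤ p - 1 := by
  apply Polynomial.natDegree_sum_le_of_forall_le
  intro l hl
  simp only [mem_Ico] at hl
  apply le_trans (natDegree_C_mul_le _ _)
  rw [natDegree_X_pow]
  omega

lemma Lpoly_comp_one_sub (h3 : 3 < p) : (Lpoly p).comp (1 - X) = Lpoly p := by
  set q := (Lpoly p).comp (1 - X) - Lpoly p with hq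
  have hder : derivative q = 0 := by
    rw [hq, derivative_sub, derivative_comp_one_sub_X, derivative_Lpoly, geom_comp_one_sub]
    ring
  have hdeg : q.natDegree ≤ p - 1 := by
    apply le_trans (natDegree_sub_le _ _)
    apply max_le _ natDegree_Lpoly_le
    apply le_trans natDegree_comp_le
    calc (Lpoly p).natDegree * (1 - X : Polynomial (ZMod p)).natDegree
        ≤ (p - 1) * 1 := by
          apply Nat.mul_le_mul natDegree_Lpoly_le
          apply le_trans (natDegree_sub_le _ _)
          simp
      _ = p - 1 := by omega
  have hq0 : q = 0 := by
    ext n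
    rcases Nat.eq_zero_or_pos n with hn | hn
    · subst hn
      rw [Polynomial.coeff_zero_eq_eval_zero, coeff_zero]
      rw [hq, eval_sub, eval_comp]
      simp only [eval_sub, eval_one, eval_X, sub_zero]
      rw [Lpoly_eval_one h3, Lpoly_eval_zero]
      ring
    · rcases Nat.lt_or_ge n p with hnp | hnp
      · have hc : (derivative q).coeff (n - 1) = 0 := by rw [hder, coeff_zero]
        rw [Polynomial.coeff_derivative] at hc
        have hn1 : n - 1 + 1 = n := by omega
        rw [hn1] at hc
        have hne : ((n - 1 : ℕ) + 1 : ZMod p) ≠ 0 := by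
          have : (((n - 1) + 1 : ℕ) : ZMod p) ≠ 0 := by
            rw [Ne, ZMod.natCast_eq_zero_iff]
            intro h
            have := Nat.le_of_dvd (by omega) h
            omega
          push_cast at this
          exact_mod_cast this
        have := mul_eq_zero.mp hc
        rcases this with h | h
        · simpa using h
        · exact absurd h hne
      · rw [coeff_zero]
        apply Polynomial.coeff_eq_zero_of_natDegree_lt
        omega
  have := sub_eq_zero.mp (hq ▸ hq0)
  exact this

lemma inv2 {K : Type*} [Field K] (a b : K) (ha : a ≠ 0) (hb : b ≠ 0) (hab : a + b ≠ 0) :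
    a⁻¹ * (a + b)⁻¹ + b⁻¹ * (a + b)⁻¹ = a⁻¹ * b⁻¹ := by
  field_simp
  ring

lemma inv3' {K : Type*} [Field K] (x y z : K) (hx : x ≠ 0) (hy : y ≠ 0) (hz : z ≠ 0)
    (hs : x + y + z ≠ 0) :
    (x⁻¹ * y⁻¹ + x⁻¹ * z⁻¹ + y⁻¹ * z⁻¹) * (x + y + z)⁻¹ = x⁻¹ * y⁻¹ * z⁻¹ := by
  have hA : x⁻¹ * y⁻¹ + x⁻¹ * z⁻¹ + y⁻¹ * z⁻¹ = x⁻¹ * y⁻¹ * z⁻¹ * (x + y + z) := by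
    field_simp
    ring
  linear_combination (x + y + z)⁻¹ * hA + x⁻¹ * y⁻¹ * z⁻¹ * mul_inv_cancel₀ hs

lemma scalar_six {K : Type*} [Field K] [DecidableEq K] (h2 : (2 : K) ≠ 0)
    (x y z : K) (hx : x ≠ 0) (hy : y ≠ 0) (hz : z ≠ 0) :
    (if x + y ≠ 0 ∧ x + y + z ≠ 0 then x⁻¹ * (x + y)⁻¹ * (x + y + z)⁻¹ else 0)
  + (if x + z ≠ 0 ∧ x + y + z ≠ 0 then x⁻¹ * (x + z)⁻¹ * (x + y + z)⁻¹ else 0)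
  + (if x + y ≠ 0 ∧ x + y + z ≠ 0 then y⁻¹ * (x + y)⁻¹ * (x + y + z)⁻¹ else 0)
  + (if y + z ≠ 0 ∧ x + y + z ≠ 0 then y⁻¹ * (y + z)⁻¹ * (x + y + z)⁻¹ else 0)
  + (if x + z ≠ 0 ∧ x + y + z ≠ 0 then z⁻¹ * (x + z)⁻¹ * (x + y + z)⁻¹ else 0)
  + (if y + z ≠ 0 ∧ x + y + z ≠ 0 then z⁻¹ * (y + z)⁻¹ * (x + y + z)⁻¹ else 0)
  = (if x + y + z ≠ 0 then x⁻¹ * y⁻¹ * z⁻¹ else 0)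
    - (if x + y = 0 then x⁻¹ * y⁻¹ * z⁻¹ else 0)
    - (if x + z = 0 then x⁻¹ * y⁻¹ * z⁻¹ else 0)
    - (if y + z = 0 then x⁻¹ * y⁻¹ * z⁻¹ else 0) := by
  by_cases hs : x + y + z = 0
  · have hxy : ¬ (x + y = 0) := fun h => hz (by linear_combination hs - h)
    have hxz : ¬ (x + z = 0) := fun h => hy (by linear_combination hs - h)
    have hyz : ¬ (y + z = 0) := fun h => hx (by linear_combination hs - h)
    simp [hs, hxy, hxz, hyz]
  · by_cases hxy : x + y = 0 <;> by_cases hxz : x + z = 0 <;> by_cases hyz : y + z = 0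
    · exfalso
      have h2x : (2 : K) * (x + y + z) = 0 := by linear_combination hxy + hxz + hyz
      exact hs ((mul_eq_zero.mp h2x).resolve_left h2)
    · -- hxy, hxz : y = -x, z = -x
      have hy' : y = -x := by linear_combination hxy
      subst hy'
      have hz' : z = -x := by linear_combination hxz
      subst hz'
      simp only [if_neg (show ¬(x + -x ≠ 0 ∧ x + -x + -x ≠ 0) from fun h => h.1 (by ring)),
        if_pos (show -x + -x ≠ 0 ∧ x + -x + -x ≠ 0 from ⟨hyz, hs⟩),
        if_pos (show x + -x + -x ≠ 0 from hs),
        if_pos (show x + -x = 0 from by ring),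
        if_neg (show ¬(-x + -x = 0) from hyz)]
      linear_combination (-(x⁻¹ * x⁻¹ * x⁻¹)) * mul_inv_cancel₀ (neg_ne_zero.mpr h2)
    · -- hxy, hyz : y = -x, z = x
      have hy' : y = -x := by linear_combination hxy
      subst hy'
      have hz' : x = z := by linear_combination -hyz
      subst hz'
      simp only [if_neg (show ¬(x + -x ≠ 0 ∧ x + -x + x ≠ 0) from fun h => h.1 (by ring)),
        if_neg (show ¬(-x + x ≠ 0 ∧ x + -x + x ≠ 0) from fun h => h.1 (by ring)),
        if_pos (show x + x ≠ 0 ∧ x + -x + x ≠ 0 from ⟨hxz, hs⟩),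
        if_pos (show x + -x + x ≠ 0 from hs),
        if_pos (show x + -x = 0 from by ring),
        if_neg (show ¬(x + x = 0) from hxz),
        if_pos (show -x + x = 0 from by ring)]
      linear_combination (x⁻¹ * x⁻¹ * x⁻¹) * mul_inv_cancel₀ h2
    · -- only hxy : y = -x
      have hy' : y = -x := by linear_combination hxy
      subst hy'
      simp only [if_neg (show ¬(x + -x ≠ 0 ∧ x + -x + z ≠ 0) from fun h => h.1 (by ring)),
        if_pos (show x + z ≠ 0 ∧ x + -x + z ≠ 0 from ⟨hxz, hs⟩),
        if_pos (show -x + z ≠ 0 ∧ x + -x + z ≠ 0 from ⟨hyz, hs⟩),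
        if_pos (show x + -x + z ≠ 0 from hs),
        if_pos (show x + -x = 0 from by ring),
        if_neg (show ¬(x + z = 0) from hxz),
        if_neg (show ¬(-x + z = 0) from hyz)]
      rw [show x + -x + z = z from by ring]
      linear_combination z⁻¹ * inv2 x z hx hz hxz + z⁻¹ * inv2 (-x) z (neg_ne_zero.mpr hx) hz hyz
    · -- hxz, hyz : z = -x, y = x
      have hz' : z = -x := by linear_combination hxz
      subst hz'
      have hy' : x = y := by linear_combination -hyz
      subst hy'
      simp only [if_neg (show ¬(x + -x ≠ 0 ∧ x + x + -x ≠ 0) from fun h => h.1 (by ring)),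
        if_pos (show x + x ≠ 0 ∧ x + x + -x ≠ 0 from ⟨hxy, hs⟩),
        if_pos (show x + x + -x ≠ 0 from hs),
        if_neg (show ¬(x + x = 0) from hxy),
        if_pos (show x + -x = 0 from by ring)]
      linear_combination (x⁻¹ * x⁻¹ * x⁻¹) * mul_inv_cancel₀ h2
    · -- only hxz : z = -x
      have hz' : z = -x := by linear_combination hxz
      subst hz'
      simp only [if_neg (show ¬(x + -x ≠ 0 ∧ x + y + -x ≠ 0) from fun h => h.1 (by ring)),
        if_pos (show x + y ≠ 0 ∧ x + y + -x ≠ 0 from ⟨hxy, hs⟩),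
        if_pos (show y + -x ≠ 0 ∧ x + y + -x ≠ 0 from ⟨hyz, hs⟩),
        if_pos (show x + y + -x ≠ 0 from hs),
        if_neg (show ¬(x + y = 0) from hxy),
        if_pos (show x + -x = 0 from by ring),
        if_neg (show ¬(y + -x = 0) from hyz)]
      rw [show x + y + -x = y from by ring]
      linear_combination y⁻¹ * inv2 x y hx hy hxy + y⁻¹ * inv2 y (-x) hy (neg_ne_zero.mpr hx) hyz
    · -- only hyz : z = -y
      have hz' : z = -y := by linear_combination hyz
      subst hz'
      simp only [if_neg (show ¬(y + -y ≠ 0 ∧ x + y + -y ≠ 0) from fun h => h.1 (by ring)),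
        if_pos (show x + y ≠ 0 ∧ x + y + -y ≠ 0 from ⟨hxy, hs⟩),
        if_pos (show x + -y ≠ 0 ∧ x + y + -y ≠ 0 from ⟨hxz, hs⟩),
        if_pos (show x + y + -y ≠ 0 from hs),
        if_neg (show ¬(x + y = 0) from hxy),
        if_neg (show ¬(x + -y = 0) from hxz),
        if_pos (show y + -y = 0 from by ring)]
      rw [show x + y + -y = x from by ring]
      linear_combination x⁻¹ * inv2 x y hx hy hxy + x⁻¹ * inv2 x (-y) hx (neg_ne_zero.mpr hy) hxz
    · -- none zero
      simp only [if_pos (show x + y ≠ 0 ∧ x + y + z ≠ 0 from ⟨hxy, hs⟩),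
        if_pos (show x + z ≠ 0 ∧ x + y + z ≠ 0 from ⟨hxz, hs⟩),
        if_pos (show y + z ≠ 0 ∧ x + y + z ≠ 0 from ⟨hyz, hs⟩),
        if_pos (show x + y + z ≠ 0 from hs),
        if_neg (show ¬(x + y = 0) from hxy),
        if_neg (show ¬(x + z = 0) from hxz),
        if_neg (show ¬(y + z = 0) from hyz)]
      linear_combination (x + y + z)⁻¹ * inv2 x y hx hy hxy + (x + y + z)⁻¹ * inv2 x z hx hz hxz
        + (x + y + z)⁻¹ * inv2 y z hy hz hyz + inv3' x y z hx hy hz hs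

noncomputable def S3 (p : ℕ) (F : ℕ → ℕ → ℕ → Polynomial (ZMod p)) : Polynomial (ZMod p) :=
  ∑ a ∈ Ico 1 p, ∑ b ∈ Ico 1 p, ∑ c ∈ Ico 1 p, F a b c

variable {p : ℕ} [hpf : Fact p.Prime]

lemma S3_congr {F G : ℕ → ℕ → ℕ → Polynomial (ZMod p)}
    (h : ∀ a ∈ Ico 1 p, ∀ b ∈ Ico 1 p, ∀ c ∈ Ico 1 p, F a b c = G a b c) :
    S3 p F = S3 p G := by
  unfold S3
  exact Finset.sum_congr rfl fun a ha => Finset.sum_congr rfl fun b hb =>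
    Finset.sum_congr rfl fun c hc => h a ha b hb c hc

lemma S3_add (F G : ℕ → ℕ → ℕ → Polynomial (ZMod p)) :
    S3 p (fun a b c => F a b c + G a b c) = S3 p F + S3 p G := by
  unfold S3
  simp [Finset.sum_add_distrib]

lemma S3_sub (F G : ℕ → ℕ → ℕ → Polynomial (ZMod p)) :
    S3 p (fun a b c => F a b c - G a b c) = S3 p F - S3 p G := by
  unfold S3
  simp [Finset.sum_sub_distrib]

lemma S3_perm213 (F : ℕ → ℕ → ℕ → Polynomial (ZMod p)) :
    S3 p F = S3 p (fun a b c => F b a c) :=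
  Finset.sum_comm

lemma S3_perm132 (F : ℕ → ℕ → ℕ → Polynomial (ZMod p)) :
    S3 p F = S3 p (fun a b c => F a c b) :=
  Finset.sum_congr rfl fun _ _ => Finset.sum_comm

lemma S3_perm312 (F : ℕ → ℕ → ℕ → Polynomial (ZMod p)) :
    S3 p F = S3 p (fun a b c => F c a b) :=
  (S3_perm213 F).trans (S3_perm132 (fun a b c => F b a c))

lemma S3_perm231 (F : ℕ → ℕ → ℕ → Polynomial (ZMod p)) :
    S3 p F = S3 p (fun a b c => F b c a) :=
  (S3_perm132 F).trans (S3_perm213 (fun a b c => F a c b))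

lemma S3_perm321 (F : ℕ → ℕ → ℕ → Polynomial (ZMod p)) :
    S3 p F = S3 p (fun a b c => F c b a) :=
  (S3_perm231 F).trans (S3_perm132 (fun a b c => F b c a))

/-- inverse product of the three entries -/
noncomputable def Wf (p : ℕ) (a b c : ℕ) : ZMod p :=
  ((a : ZMod p))⁻¹ * ((b : ZMod p))⁻¹ * ((c : ZMod p))⁻¹

lemma cube_expand (u : Polynomial (ZMod p)) :
    (∑ l ∈ Ico 1 p, C ((l : ZMod p))⁻¹ * u ^ l) ^ 3
      = S3 p (fun a b c => C (Wf p a b c) * u ^ (a + b + c)) := by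
  have h3 : (∑ l ∈ Ico 1 p, C ((l : ZMod p))⁻¹ * u ^ l) ^ 3
      = ((∑ l ∈ Ico 1 p, C ((l : ZMod p))⁻¹ * u ^ l) * (∑ l ∈ Ico 1 p, C ((l : ZMod p))⁻¹ * u ^ l))
        * (∑ l ∈ Ico 1 p, C ((l : ZMod p))⁻¹ * u ^ l) := by ring
  rw [h3, Finset.sum_mul_sum, Finset.sum_mul]
  unfold S3
  apply Finset.sum_congr rfl
  intro a _
  rw [Finset.sum_mul]
  apply Finset.sum_congr rfl
  intro b _
  rw [Finset.mul_sum]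
  apply Finset.sum_congr rfl
  intro c _
  unfold Wf
  simp only [map_mul, pow_add]
  ring

noncomputable def Tm (p : ℕ) (u : Polynomial (ZMod p)) (a b c : ℕ) : Polynomial (ZMod p) :=
  if ¬ p ∣ a ∧ ¬ p ∣ (a + b) ∧ ¬ p ∣ (a + b + c) then
    C ((a : ZMod p)⁻¹ * ((a + b : ℕ) : ZMod p)⁻¹ * ((a + b + c : ℕ) : ZMod p)⁻¹)
      * u ^ (a + b + c)
  else 0

lemma Tm_eq (u : Polynomial (ZMod p)) {a : ℕ} (ha : a ∈ Ico 1 p) (b c : ℕ) :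
    Tm p u a b c
      = C (if (a : ZMod p) + (b : ZMod p) ≠ 0 ∧ (a : ZMod p) + (b : ZMod p) + (c : ZMod p) ≠ 0
          then ((a : ZMod p))⁻¹ * ((a : ZMod p) + (b : ZMod p))⁻¹
            * ((a : ZMod p) + (b : ZMod p) + (c : ZMod p))⁻¹ else 0) * u ^ (a + b + c) := by
  unfold Tm
  have e1 : ((a + b : ℕ) : ZMod p) = (a : ZMod p) + (b : ZMod p) := by push_cast; ring
  have e2 : ((a + b + c : ℕ) : ZMod p) = (a : ZMod p) + (b : ZMod p) + (c : ZMod p) := by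
    push_cast; ring
  have hiff : (¬ p ∣ a ∧ ¬ p ∣ (a + b) ∧ ¬ p ∣ (a + b + c))
      ↔ ((a : ZMod p) + (b : ZMod p) ≠ 0 ∧ (a : ZMod p) + (b : ZMod p) + (c : ZMod p) ≠ 0) := by
    constructor
    · rintro ⟨-, h1, h2⟩
      exact ⟨e1 ▸ cast_ne_zero_of_not_dvd h1, e2 ▸ cast_ne_zero_of_not_dvd h2⟩
    · rintro ⟨h1, h2⟩
      refine ⟨not_dvd_of_mem ha, fun hd => h1 ?_, fun hd => h2 ?_⟩
      · rw [← e1]; exact (ZMod.natCast_eq_zero_iff _ _).mpr hd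
      · rw [← e2]; exact (ZMod.natCast_eq_zero_iff _ _).mpr hd
  rw [if_congr hiff rfl rfl]
  split_ifs with h
  · rw [e1, e2]
  · simp

lemma sixT (h3 : 3 < p) (u : Polynomial (ZMod p)) {a b c : ℕ}
    (ha : a ∈ Ico 1 p) (hb : b ∈ Ico 1 p) (hc : c ∈ Ico 1 p) :
    Tm p u a b c + Tm p u a c b + Tm p u b a c + Tm p u b c a + Tm p u c a b + Tm p u c b a
    = (if ¬ p ∣ (a + b + c) then C (Wf p a b c) * u ^ (a + b + c) else 0)
      - (if (a : ZMod p) + (b : ZMod p) = 0 then C (Wf p a b c) * u ^ (a + b + c) else 0)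
      - (if (a : ZMod p) + (c : ZMod p) = 0 then C (Wf p a b c) * u ^ (a + b + c) else 0)
      - (if (b : ZMod p) + (c : ZMod p) = 0 then C (Wf p a b c) * u ^ (a + b + c) else 0) := by
  have hx : (a : ZMod p) ≠ 0 := cast_mem_ne_zero ha
  have hy : (b : ZMod p) ≠ 0 := cast_mem_ne_zero hb
  have hz : (c : ZMod p) ≠ 0 := cast_mem_ne_zero hc
  have h2 : (2 : ZMod p) ≠ 0 := by
    have : ¬ p ∣ 2 := by intro h; have := Nat.le_of_dvd (by norm_num) h; omega
    simpa using cast_ne_zero_of_not_dvd this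
  rw [Tm_eq u ha b c, Tm_eq u ha c b, Tm_eq u hb a c, Tm_eq u hb c a,
    Tm_eq u hc a b, Tm_eq u hc b a]
  rw [show a + c + b = a + b + c from by omega, show b + a + c = a + b + c from by omega,
    show b + c + a = a + b + c from by omega, show c + a + b = a + b + c from by omega,
    show c + b + a = a + b + c from by omega]
  rw [show (b : ZMod p) + (a : ZMod p) = (a : ZMod p) + (b : ZMod p) from by ring,
    show (c : ZMod p) + (a : ZMod p) = (a : ZMod p) + (c : ZMod p) from by ring,
    show (c : ZMod p) + (b : ZMod p) = (b : ZMod p) + (c : ZMod p) from by ring]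
  rw [show (a : ZMod p) + (c : ZMod p) + (b : ZMod p)
      = (a : ZMod p) + (b : ZMod p) + (c : ZMod p) from by ring,
    show (b : ZMod p) + (c : ZMod p) + (a : ZMod p)
      = (a : ZMod p) + (b : ZMod p) + (c : ZMod p) from by ring]
  simp only [← add_mul, ← map_add]
  rw [scalar_six h2 (a : ZMod p) (b : ZMod p) (c : ZMod p) hx hy hz]
  have hiffs : ((a : ZMod p) + (b : ZMod p) + (c : ZMod p) ≠ 0) ↔ ¬ p ∣ (a + b + c) := by
    rw [Ne, ← Nat.cast_add, ← Nat.cast_add, ZMod.natCast_eq_zero_iff]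
  unfold Wf
  simp only [map_sub, sub_mul, apply_ite C, map_zero, ite_mul, zero_mul]
  rw [if_congr hiffs rfl rfl]

lemma sum_reflect {M : Type*} [AddCommMonoid M] (f : ℕ → M) :
    ∑ l ∈ Ico 1 p, f l = ∑ l ∈ Ico 1 p, f (p - l) := by
  apply Finset.sum_nbij' (fun l => p - l) (fun l => p - l) <;>
    intro a ha <;> simp only [mem_Ico] at * <;> try omega
  congr 1
  omega

lemma pair_ab (h3 : 3 < p) (u : Polynomial (ZMod p)) :
    S3 p (fun a b c =>
      if (a : ZMod p) + (b : ZMod p) = 0 then C (Wf p a b c) * u ^ (a + b + c) else 0) = 0 := by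
  unfold S3
  have inner : ∀ a ∈ Ico 1 p,
      (∑ b ∈ Ico 1 p, ∑ c ∈ Ico 1 p,
        if (a : ZMod p) + (b : ZMod p) = 0 then C (Wf p a b c) * u ^ (a + b + c) else 0)
      = C ((a : ZMod p)⁻¹ * (-(a : ZMod p))⁻¹)
          * ∑ c ∈ Ico 1 p, C ((c : ZMod p))⁻¹ * u ^ (p + c) := by
    intro a ha
    simp only [mem_Ico] at ha
    rw [Finset.sum_comm, Finset.mul_sum]
    apply Finset.sum_congr rfl
    intro c hc
    have hab : ∀ b ∈ Ico 1 p,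
        (if (a : ZMod p) + (b : ZMod p) = 0 then C (Wf p a b c) * u ^ (a + b + c) else 0)
        = (if b = p - a then C (Wf p a b c) * u ^ (a + b + c) else 0) := by
      intro b hb
      simp only [mem_Ico] at hb
      refine if_congr ?_ rfl rfl
      constructor
      · intro h
        have hd : p ∣ (a + b) := by
          rw [← ZMod.natCast_eq_zero_iff]
          push_cast
          exact h
        have := (dvd_iff_eq_p h3 (by omega) (by omega)).mp hd
        omega
      · intro h
        have : a + b = p := by omega
        have : ((a + b : ℕ) : ZMod p) = 0 := by rw [this, ZMod.natCast_self]
        push_cast at this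
        exact this
    rw [Finset.sum_congr rfl hab, Finset.sum_ite_eq' (Ico 1 p) (p - a)
      (fun b => C (Wf p a b c) * u ^ (a + b + c))]
    rw [if_pos (by simp only [mem_Ico]; omega : p - a ∈ Ico 1 p)]
    unfold Wf
    rw [cast_p_sub (by omega : a ≤ p), show a + (p - a) + c = p + c from by omega]
    simp only [map_mul]
    ring
  rw [Finset.sum_congr rfl inner, ← Finset.sum_mul]
  have hz : (∑ a ∈ Ico 1 p, C ((a : ZMod p)⁻¹ * (-(a : ZMod p))⁻¹)) = (0 : Polynomial (ZMod p)) := by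
    rw [← map_sum]
    have h0 : ∑ a ∈ Ico 1 p, (a : ZMod p)⁻¹ * (-(a : ZMod p))⁻¹ = 0 := by
      have heq : ∀ a ∈ Ico 1 p, (a : ZMod p)⁻¹ * (-(a : ZMod p))⁻¹
          = -((a : ZMod p)⁻¹ * (a : ZMod p)⁻¹) := by
        intro a _
        rw [inv_neg]
        ring
      rw [Finset.sum_congr rfl heq, Finset.sum_neg_distrib, sum_inv_sq_eq_zero h3, neg_zero]
    rw [h0, map_zero]
  rw [hz, zero_mul]

lemma pair_ac (h3 : 3 < p) (u : Polynomial (ZMod p)) :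
    S3 p (fun a b c =>
      if (a : ZMod p) + (c : ZMod p) = 0 then C (Wf p a b c) * u ^ (a + b + c) else 0) = 0 := by
  rw [S3_perm132 (fun a b c =>
    if (a : ZMod p) + (c : ZMod p) = 0 then C (Wf p a b c) * u ^ (a + b + c) else 0)]
  refine Eq.trans ?_ (pair_ab h3 u)
  apply S3_congr
  intro a _ b _ c _
  refine if_congr Iff.rfl ?_ rfl
  unfold Wf
  rw [show a + c + b = a + b + c from by omega,
    show ((a : ZMod p))⁻¹ * ((c : ZMod p))⁻¹ * ((b : ZMod p))⁻¹
      = ((a : ZMod p))⁻¹ * ((b : ZMod p))⁻¹ * ((c : ZMod p))⁻¹ from by ring]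
lemma pair_bc (h3 : 3 < p) (u : Polynomial (ZMod p)) :
    S3 p (fun a b c =>
      if (b : ZMod p) + (c : ZMod p) = 0 then C (Wf p a b c) * u ^ (a + b + c) else 0) = 0 := by
  rw [S3_perm312 (fun a b c =>
    if (b : ZMod p) + (c : ZMod p) = 0 then C (Wf p a b c) * u ^ (a + b + c) else 0)]
  refine Eq.trans ?_ (pair_ab h3 u)
  apply S3_congr
  intro a _ b _ c _
  refine if_congr Iff.rfl ?_ rfl
  unfold Wf
  rw [show c + a + b = a + b + c from by omega,
    show ((c : ZMod p))⁻¹ * ((a : ZMod p))⁻¹ * ((b : ZMod p))⁻¹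
      = ((a : ZMod p))⁻¹ * ((b : ZMod p))⁻¹ * ((c : ZMod p))⁻¹ from by ring]

noncomputable def cP3 (p : ℕ) (n : ℕ) : ZMod p :=
  ∑ a ∈ Ico 1 p, ∑ b ∈ Ico 1 p, ∑ c ∈ Ico 1 p, if a + b + c = n then Wf p a b c else 0

lemma S3_factor (n : ℕ) (v : Polynomial (ZMod p)) :
    S3 p (fun a b c => (if a + b + c = n then C (Wf p a b c) else 0) * v) = C (cP3 p n) * v := by
  have hC : C (cP3 p n) = ∑ a ∈ Ico 1 p, ∑ b ∈ Ico 1 p, ∑ c ∈ Ico 1 p,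
      (if a + b + c = n then C (Wf p a b c) else (0 : Polynomial (ZMod p))) := by
    unfold cP3
    simp only [map_sum, apply_ite C, map_zero]
  rw [hC]
  unfold S3
  simp only [Finset.sum_mul]

lemma cP3_reflect (h3 : 3 < p) : cP3 p (2 * p) = - cP3 p p := by
  unfold cP3
  rw [sum_reflect (p := p)]
  refine Eq.trans ?_ (Finset.sum_neg_distrib _)
  apply Finset.sum_congr rfl
  intro a ha
  rw [sum_reflect (p := p)]
  refine Eq.trans ?_ (Finset.sum_neg_distrib _)
  apply Finset.sum_congr rfl
  intro b hb
  rw [sum_reflect (p := p)]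
  refine Eq.trans ?_ (Finset.sum_neg_distrib _)
  apply Finset.sum_congr rfl
  intro c hc
  simp only [mem_Ico] at ha hb hc
  by_cases h : a + b + c = p
  · rw [if_pos (by omega : (p - a) + (p - b) + (p - c) = 2 * p), if_pos h]
    unfold Wf
    rw [cast_p_sub (by omega : a ≤ p), cast_p_sub (by omega : b ≤ p),
      cast_p_sub (by omega : c ≤ p)]
    simp only [inv_neg]
    ring
  · rw [if_neg (by omega : ¬ ((p - a) + (p - b) + (p - c) = 2 * p)), if_neg h, neg_zero]

lemma split_point (h3 : 3 < p) (u : Polynomial (ZMod p)) {a b c : ℕ}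
    (ha : a ∈ Ico 1 p) (hb : b ∈ Ico 1 p) (hc : c ∈ Ico 1 p) :
    (if ¬ p ∣ (a + b + c) then C (Wf p a b c) * u ^ (a + b + c) else 0)
    = C (Wf p a b c) * u ^ (a + b + c)
      - (if a + b + c = p then C (Wf p a b c) else 0) * u ^ p
      - (if a + b + c = 2 * p then C (Wf p a b c) else 0) * u ^ (2 * p) := by
  simp only [mem_Ico] at ha hb hc
  by_cases h1 : a + b + c = p
  · rw [if_neg (not_not_intro (h1 ▸ dvd_rfl)), if_pos h1,
      if_neg (show ¬ (a + b + c = 2 * p) from by omega), h1]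
    ring
  · by_cases h2 : a + b + c = 2 * p
    · rw [if_neg (not_not_intro (h2 ▸ (dvd_mul_left p 2))), if_neg h1, if_pos h2, h2]
      ring
    · have hnd : ¬ p ∣ (a + b + c) := by
        intro hd
        rcases dvd_cases3 h3 (by omega) (by omega) hd with h | h <;> omega
      rw [if_pos hnd, if_neg h1, if_neg h2]
      ring

lemma dvd_split (h3 : 3 < p) (u : Polynomial (ZMod p)) :
    S3 p (fun a b c => if ¬ p ∣ (a + b + c) then C (Wf p a b c) * u ^ (a + b + c) else 0)
    = (∑ l ∈ Ico 1 p, C ((l : ZMod p))⁻¹ * u ^ l) ^ 3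
      - C (cP3 p p) * u ^ p - C (cP3 p (2 * p)) * u ^ (2 * p) := by
  rw [S3_congr (fun a ha b hb c hc => split_point h3 u ha hb hc)]
  rw [show (fun a b c => C (Wf p a b c) * u ^ (a + b + c)
      - (if a + b + c = p then C (Wf p a b c) else 0) * u ^ p
      - (if a + b + c = 2 * p then C (Wf p a b c) else 0) * u ^ (2 * p))
    = (fun a b c => (C (Wf p a b c) * u ^ (a + b + c)
      - (if a + b + c = p then C (Wf p a b c) else 0) * u ^ p)
      - (if a + b + c = 2 * p then C (Wf p a b c) else 0) * u ^ (2 * p)) from rfl]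
  rw [S3_sub, S3_sub, cube_expand, S3_factor, S3_factor]

/-- £^OY_{(1,1,1)} with tˢ replaced by uˢ for a polynomial u. -/
noncomputable def OY111 (p : ℕ) (u : Polynomial (ZMod p)) : Polynomial (ZMod p) :=
  ∑ l1 ∈ Ico 1 p, ∑ l2 ∈ Ico 1 p, ∑ l3 ∈ Ico 1 p,
    if ¬ p ∣ l1 ∧ ¬ p ∣ (l1 + l2) ∧ ¬ p ∣ (l1 + l2 + l3) then
      C ((l1 : ZMod p)⁻¹ * ((l1 + l2 : ℕ) : ZMod p)⁻¹ * ((l1 + l2 + l3 : ℕ) : ZMod p)⁻¹)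
        * u ^ (l1 + l2 + l3)
    else 0

lemma OY111_eq_S3 (u : Polynomial (ZMod p)) : OY111 p u = S3 p (Tm p u) := rfl

lemma six_mul_OY (h3 : 3 < p) (u : Polynomial (ZMod p)) :
    6 * OY111 p u = (∑ l ∈ Ico 1 p, C ((l : ZMod p))⁻¹ * u ^ l) ^ 3
      - C (cP3 p p) * u ^ p + C (cP3 p p) * u ^ (2 * p) := by
  have h6 : 6 * OY111 p u
      = S3 p (fun a b c => Tm p u a b c + Tm p u a c b + Tm p u b a c + Tm p u b c a
          + Tm p u c a b + Tm p u c b a) := by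
    have hsplit : S3 p (fun a b c => Tm p u a b c + Tm p u a c b + Tm p u b a c + Tm p u b c a
          + Tm p u c a b + Tm p u c b a)
        = S3 p (Tm p u) + S3 p (fun a b c => Tm p u a c b) + S3 p (fun a b c => Tm p u b a c)
          + S3 p (fun a b c => Tm p u b c a) + S3 p (fun a b c => Tm p u c a b)
          + S3 p (fun a b c => Tm p u c b a) := by
      unfold S3
      simp only [Finset.sum_add_distrib]
    rw [hsplit, ← S3_perm132 (Tm p u), ← S3_perm213 (Tm p u), ← S3_perm231 (Tm p u),
      ← S3_perm312 (Tm p u), ← S3_perm321 (Tm p u), OY111_eq_S3]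
    ring
  rw [h6, S3_congr (fun a ha b hb c hc => sixT h3 u ha hb hc), S3_sub, S3_sub, S3_sub,
    pair_ab h3 u, pair_ac h3 u, pair_bc h3 u, dvd_split h3 u, cP3_reflect h3, map_neg]
  ring

theorem OY111_functional_equation (p : ℕ) (hp : p.Prime) (h3 : 3 < p) :
    OY111 p X = OY111 p (1 - X) := by
  haveI : Fact p.Prime := ⟨hp⟩
  have hL : ∑ l ∈ Ico 1 p, C ((l : ZMod p))⁻¹ * (1 - X) ^ l = Lpoly p := by
    have hcomp : (Lpoly p).comp (1 - X) = ∑ l ∈ Ico 1 p, C ((l : ZMod p))⁻¹ * (1 - X) ^ l := by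
      unfold Lpoly
      simp [Polynomial.eval₂_finset_sum, Polynomial.comp]
    rw [← hcomp, Lpoly_comp_one_sub h3]
  have hLX : ∑ l ∈ Ico 1 p, C ((l : ZMod p))⁻¹ * (X : Polynomial (ZMod p)) ^ l = Lpoly p := rfl
  have e1 := six_mul_OY h3 (X : Polynomial (ZMod p))
  have e2 := six_mul_OY h3 (1 - X : Polynomial (ZMod p))
  rw [hL] at e2
  rw [hLX] at e1
  have hp1 : (1 - X : Polynomial (ZMod p)) ^ p = 1 - X ^ p := one_sub_X_pow_char
  have hp2 : (1 - X : Polynomial (ZMod p)) ^ (2 * p) = (1 - X ^ p) ^ 2 := by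
    rw [show 2 * p = p * 2 from by ring, pow_mul, hp1]
  rw [hp1, hp2] at e2
  have h6' : (6 : ZMod p) ≠ 0 := by
    have hnd : ¬ p ∣ 6 := by
      intro h
      have := Nat.le_of_dvd (by norm_num) h
      interval_cases p <;> first
        | omega
        | (exact absurd hp (by decide))
    simpa using cast_ne_zero_of_not_dvd hnd
  have h6 : (6 : Polynomial (ZMod p)) ≠ 0 := by
    rw [show (6 : Polynomial (ZMod p)) = C (6 : ZMod p) from (map_ofNat C 6).symm]
    exact C_ne_zero.mpr h6'
  apply mul_left_cancel₀ h6
  rw [e1, e2]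
  ring
end

section
/- For every prime p > 3, ζ^{(2)}(1,2) = -ζ(1,2) in ZMod p, where ζ(1,2) = \sum_{0<l_1,l_2<p, l_1+l_2<p} l_1^{-1}(l_1+l_2)^{-2} and ζ^{(2)}(1,2) = \sum_{0<l_1,l_2<p, l_1+l_2>p} l_1^{-1}(l_1+l_2)^{-2} (note l_1+l_2 \ne p in the second sum is automatic only if we restrict to l_1+l_2 not divisible by p). -/
open Finset

theorem zeta2_12_eq_neg_zeta_12 (p : ℕ) (hp : p.Prime) (h3 : 3 < p) :
    (∑ l1 ∈ Ico 1 p, ∑ l2 ∈ Ico 1 p,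
      if p < l1 + l2 then (l1 : ZMod p)⁻¹ * (((l1 + l2 : ℕ) : ZMod p)⁻¹) ^ 2 else 0)
    = - ∑ l1 ∈ Ico 1 p, ∑ l2 ∈ Ico 1 p,
        if l1 + l2 < p then (l1 : ZMod p)⁻¹ * (((l1 + l2 : ℕ) : ZMod p)⁻¹) ^ 2 else 0 := by
  have hF := Fact.mk hp
  rw [← Finset.sum_product', ← Finset.sum_product', ← Finset.sum_neg_distrib]
  apply Finset.sum_nbij' (fun x => (p - x.1, p - x.2)) (fun x => (p - x.1, p - x.2))
  · rintro ⟨a, b⟩ h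
    simp only [Finset.mem_product, Finset.mem_Ico] at h ⊢
    omega
  · rintro ⟨a, b⟩ h
    simp only [Finset.mem_product, Finset.mem_Ico] at h ⊢
    omega
  · rintro ⟨a, b⟩ h
    simp only [Finset.mem_product, Finset.mem_Ico] at h
    simp only [Prod.mk.injEq]
    omega
  · rintro ⟨a, b⟩ h
    simp only [Finset.mem_product, Finset.mem_Ico] at h
    simp only [Prod.mk.injEq]
    omega
  · rintro ⟨a, b⟩ h
    simp only [Finset.mem_product, Finset.mem_Ico] at h
    have hcond : p - a + (p - b) < p ↔ p < a + b := by omega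
    have h1 : ((p - a : ℕ) : ZMod p) = -(a : ZMod p) := by
      have : ((p - a + a : ℕ) : ZMod p) = 0 := by
        have : p - a + a = p := by omega
        rw [this]; exact ZMod.natCast_self p
      push_cast at this
      linear_combination this
    have h2 : ((p - a + (p - b) : ℕ) : ZMod p) = -((a + b : ℕ) : ZMod p) := by
      have hs : p - a + (p - b) + (a + b) = 2 * p := by omega
      have : ((p - a + (p - b) + (a + b) : ℕ) : ZMod p) = 0 := by
        rw [hs]; push_cast; simp [ZMod.natCast_self p]
      push_cast at this ⊢
      linear_combination this
    simp only [hcond, h1, h2]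
    by_cases hc : p < a + b
    · simp only [if_pos hc, inv_neg, neg_sq, neg_mul, neg_neg]
    · simp [hc]
end

section
/- (Shuffle relation, depth (1,1) case) For every prime p > 3, in (ZMod p)[t]: £_1(t)^2 = 2 £^{OY}_{(1,1)}(t) - Z(2) t^p, where Z(2) := \sum_{0<l<p} l^{-2}. In particular, since Z(2) = 0 for p > 3, £_1(t)^2 = 2 £^{OY}_{(1,1)}(t). -/
open Polynomial Finset

theorem shuffle_depth_one_one (p : ℕ) (hp : p.Prime) (h3 : 3 < p) :
    (L1 p) ^ 2 = 2 * OY11 p - C (∑ l ∈ Ico 1 p, ((l : ZMod p)⁻¹) ^ 2) * X ^ p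
      ∧ (L1 p) ^ 2 = 2 * OY11 p := by
  haveI : Fact p.Prime := ⟨hp⟩
  have hp0 : 0 < p := hp.pos
  have hne : ∀ l ∈ Ico 1 p, (l : ZMod p) ≠ 0 := by
    intro l hl
    rw [mem_Ico] at hl
    rw [Ne, ZMod.natCast_eq_zero_iff]
    exact fun h => absurd (Nat.le_of_dvd (by omega) h) (by omega)
  -- Z(2) = 0
  have hZ : (∑ l ∈ Ico 1 p, ((l : ZMod p)⁻¹) ^ 2) = 0 := by
    have h1 : ∑ l ∈ range p, ((l : ZMod p)⁻¹) ^ 2 = ∑ x : ZMod p, (x⁻¹) ^ 2 := by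
      refine Finset.sum_nbij' (fun l => (l : ZMod p)) (fun x => x.val) ?_ ?_ ?_ ?_ ?_
      · intro a _; exact mem_univ _
      · intro x _; simpa [Finset.mem_range] using ZMod.val_lt x
      · intro a ha; exact ZMod.val_cast_of_lt (Finset.mem_range.mp ha)
      · intro x _; exact ZMod.natCast_zmod_val x
      · intro a _; rfl
    have h2 : ∑ l ∈ range p, ((l : ZMod p)⁻¹) ^ 2
        = ∑ l ∈ Ico 1 p, ((l : ZMod p)⁻¹) ^ 2 := by
      rw [Finset.range_eq_Ico, Finset.sum_eq_sum_Ico_succ_bot hp0]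
      simp
    have h3' : ∑ x : ZMod p, (x : ZMod p) ^ 2 = ∑ x : ZMod p, (x⁻¹) ^ 2 :=
      Fintype.sum_bijective Inv.inv inv_involutive.bijective _ _ (fun x => by rw [inv_inv])
    have h4 : ∑ x : ZMod p, (x : ZMod p) ^ 2 = 0 := by
      apply FiniteField.sum_pow_lt_card_sub_one
      rw [ZMod.card]; omega
    rw [← h2, h1, ← h3', h4]
  have hsub : ∀ l ∈ Ico 1 p, ((p - l : ℕ) : ZMod p) = -(l : ZMod p) := by
    intro l hl; rw [mem_Ico] at hl
    rw [Nat.cast_sub hl.2.le, ZMod.natCast_self, zero_sub]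
  have key : (L1 p) ^ 2 = 2 * OY11 p := by
    have hsymm : OY11 p = ∑ l1 ∈ Ico 1 p, ∑ l2 ∈ Ico 1 p,
        (if ¬ p ∣ (l1 + l2) then
          C ((l2 : ZMod p)⁻¹ * ((l1 + l2 : ℕ) : ZMod p)⁻¹) * X ^ (l1 + l2) else 0) := by
      rw [OY11, Finset.sum_comm]
      exact Finset.sum_congr rfl fun l1 _ => Finset.sum_congr rfl fun l2 _ => by
        rw [add_comm l2 l1]
    have hsq : (L1 p) ^ 2 = ∑ l1 ∈ Ico 1 p, ∑ l2 ∈ Ico 1 p,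
        C ((l1 : ZMod p)⁻¹ * (l2 : ZMod p)⁻¹) * X ^ (l1 + l2) := by
      rw [L1, sq, Finset.sum_mul_sum]
      refine Finset.sum_congr rfl fun l1 _ => Finset.sum_congr rfl fun l2 _ => ?_
      rw [map_mul, pow_add]; ring
    have h2 : 2 * OY11 p = ∑ l1 ∈ Ico 1 p, ∑ l2 ∈ Ico 1 p,
        ((if ¬ p ∣ (l1 + l2) then
            C ((l1 : ZMod p)⁻¹ * ((l1 + l2 : ℕ) : ZMod p)⁻¹) * X ^ (l1 + l2) else 0)
        + (if ¬ p ∣ (l1 + l2) then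
            C ((l2 : ZMod p)⁻¹ * ((l1 + l2 : ℕ) : ZMod p)⁻¹) * X ^ (l1 + l2) else 0)) := by
      rw [two_mul]
      nth_rewrite 2 [hsymm]
      rw [OY11, ← Finset.sum_add_distrib]
      exact Finset.sum_congr rfl fun l1 _ => (Finset.sum_add_distrib).symm
    rw [hsq, h2, ← sub_eq_zero, ← Finset.sum_sub_distrib]
    have hdvd : ∀ l1 ∈ Ico 1 p, ∀ l2 ∈ Ico 1 p, (p ∣ (l1 + l2) ↔ l2 = p - l1) := by
      intro l1 hl1 l2 hl2
      rw [mem_Ico] at hl1 hl2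
      constructor
      · intro h
        have h1 : p ≤ l1 + l2 := Nat.le_of_dvd (by omega) h
        have h2' : p ∣ (l1 + l2 - p) := Nat.dvd_sub h dvd_rfl
        have h3' : l1 + l2 - p < p := by omega
        have := Nat.eq_zero_of_dvd_of_lt h2' h3'
        omega
      · rintro rfl; exact ⟨1, by omega⟩
    have step : ∀ l1 ∈ Ico 1 p,
        ((∑ l2 ∈ Ico 1 p, C ((l1 : ZMod p)⁻¹ * (l2 : ZMod p)⁻¹) * X ^ (l1 + l2))
        - ∑ l2 ∈ Ico 1 p,
          ((if ¬ p ∣ (l1 + l2) then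
              C ((l1 : ZMod p)⁻¹ * ((l1 + l2 : ℕ) : ZMod p)⁻¹) * X ^ (l1 + l2) else 0)
          + (if ¬ p ∣ (l1 + l2) then
              C ((l2 : ZMod p)⁻¹ * ((l1 + l2 : ℕ) : ZMod p)⁻¹) * X ^ (l1 + l2) else 0)))
        = C (-((l1 : ZMod p)⁻¹ ^ 2)) * X ^ p := by
      intro l1 hl1
      rw [← Finset.sum_sub_distrib]
      have termwise : ∀ l2 ∈ Ico 1 p,
          (C ((l1 : ZMod p)⁻¹ * (l2 : ZMod p)⁻¹) * X ^ (l1 + l2)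
          - ((if ¬ p ∣ (l1 + l2) then
              C ((l1 : ZMod p)⁻¹ * ((l1 + l2 : ℕ) : ZMod p)⁻¹) * X ^ (l1 + l2) else 0)
          + (if ¬ p ∣ (l1 + l2) then
              C ((l2 : ZMod p)⁻¹ * ((l1 + l2 : ℕ) : ZMod p)⁻¹) * X ^ (l1 + l2) else 0)))
          = if l2 = p - l1 then
              C ((l1 : ZMod p)⁻¹ * (l2 : ZMod p)⁻¹) * X ^ (l1 + l2) else 0 := by
        intro l2 hl2
        by_cases hc : p ∣ l1 + l2
        · rw [if_pos ((hdvd l1 hl1 l2 hl2).mp hc)]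
          simp [hc]
        · rw [if_neg (fun h => hc ((hdvd l1 hl1 l2 hl2).mpr h))]
          simp only [hc, not_false_iff, if_true]
          have ha := hne l1 hl1
          have hb := hne l2 hl2
          have hsne : ((l1 + l2 : ℕ) : ZMod p) ≠ 0 := by
            rw [Ne, ZMod.natCast_eq_zero_iff]; exact hc
          have hcast : ((l1 + l2 : ℕ) : ZMod p) = (l1 : ZMod p) + (l2 : ZMod p) :=
            Nat.cast_add l1 l2
          rw [hcast] at hsne ⊢
          have keyc : (l1 : ZMod p)⁻¹ * (l2 : ZMod p)⁻¹
              = (l1 : ZMod p)⁻¹ * ((l1 : ZMod p) + (l2 : ZMod p))⁻¹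
              + (l2 : ZMod p)⁻¹ * ((l1 : ZMod p) + (l2 : ZMod p))⁻¹ := by
            field_simp
            ring
          rw [keyc, map_add, add_mul, sub_self]
      rw [Finset.sum_congr rfl termwise]
      have hmem : p - l1 ∈ Ico 1 p := by
        rw [mem_Ico] at hl1 ⊢; omega
      rw [Finset.sum_ite_eq' (Ico 1 p) (p - l1)
        (fun l2 => C ((l1 : ZMod p)⁻¹ * (l2 : ZMod p)⁻¹) * X ^ (l1 + l2)), if_pos hmem]
      have hpl : l1 + (p - l1) = p := by rw [mem_Ico] at hl1; omega
      rw [hpl, hsub l1 hl1]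
      congr 1
      rw [inv_neg]
      ring
    rw [Finset.sum_congr rfl step, ← Finset.sum_mul, ← map_sum, Finset.sum_neg_distrib,
      hZ, neg_zero, map_zero, zero_mul]
  exact ⟨by rw [hZ, map_zero, zero_mul, sub_zero]; exact key, key⟩
end

section
/- For every prime p > 5, ζ^{(2)}(1,1,1) := \sum_{0<l_1,l_2,l_3<p, p<l_1+l_2+l_3<2p, all partial sums prime to p} (l_1(l_1+l_2)(l_1+l_2+l_3))^{-1} \equiv 0 \pmod p. -/
open Finset

private lemma cast_mulp_sub (p k x : ℕ) (h : x ≤ k * p) :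
    ((k * p - x : ℕ) : ZMod p) = -(x : ZMod p) := by
  rw [eq_neg_iff_add_eq_zero, ← Nat.cast_add, Nat.sub_add_cancel h]
  simp [ZMod.natCast_self]

private lemma dvd_mulp_sub_iff (p k x : ℕ) (h : x ≤ k * p) :
    p ∣ (k * p - x) ↔ p ∣ x := by
  have hkp : p ∣ k * p := Dvd.dvd.mul_left dvd_rfl k
  constructor
  · intro hd
    have := Nat.dvd_sub hkp hd
    rwa [Nat.sub_sub_self h] at this
  · intro hd
    exact Nat.dvd_sub hkp hd

theorem zeta2_111_vanishes (p : ℕ) (hp : p.Prime) (h5 : 5 < p) :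
    ∑ l1 ∈ Ico 1 p, ∑ l2 ∈ Ico 1 p, ∑ l3 ∈ Ico 1 p,
      (if p < l1 + l2 + l3 ∧ l1 + l2 + l3 < 2 * p ∧ ¬ p ∣ l1 ∧ ¬ p ∣ (l1 + l2)
          ∧ ¬ p ∣ (l1 + l2 + l3) then
        (l1 : ZMod p)⁻¹ * ((l1 + l2 : ℕ) : ZMod p)⁻¹ * ((l1 + l2 + l3 : ℕ) : ZMod p)⁻¹
      else 0) = 0 := by
  haveI : Fact p.Prime := ⟨hp⟩
  obtain ⟨m, hm⟩ := hp.odd_of_ne_two (by omega)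
  have key : ∀ s : Finset (ℕ × ℕ × ℕ), s = (Ico 1 p) ×ˢ (Ico 1 p) ×ˢ (Ico 1 p) →
      ∑ a ∈ s,
        (if p < a.1 + a.2.1 + a.2.2 ∧ a.1 + a.2.1 + a.2.2 < 2 * p ∧ ¬ p ∣ a.1
            ∧ ¬ p ∣ (a.1 + a.2.1) ∧ ¬ p ∣ (a.1 + a.2.1 + a.2.2) then
          (a.1 : ZMod p)⁻¹ * ((a.1 + a.2.1 : ℕ) : ZMod p)⁻¹
            * ((a.1 + a.2.1 + a.2.2 : ℕ) : ZMod p)⁻¹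
        else 0) = 0 := by
    intro s hs
    apply Finset.sum_involution (fun a _ => (p - a.1, p - a.2.1, p - a.2.2))
    · intro a ha
      subst hs
      simp only [Finset.mem_product, Finset.mem_Ico] at ha
      obtain ⟨⟨h1a, h1b⟩, ⟨h2a, h2b⟩, ⟨h3a, h3b⟩⟩ := ha
      obtain ⟨l1, l2, l3⟩ := a
      simp only at *
      have e1 : p - l1 = 1 * p - l1 := by omega
      have e2 : (p - l1) + (p - l2) = 2 * p - (l1 + l2) := by omega
      have e3 : (p - l1) + (p - l2) + (p - l3) = 3 * p - (l1 + l2 + l3) := by omega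
      have c1 : ((p - l1 : ℕ) : ZMod p) = -(l1 : ZMod p) := by
        rw [e1]; exact cast_mulp_sub p 1 l1 (by omega)
      have c2 : (((p - l1) + (p - l2) : ℕ) : ZMod p) = -((l1 + l2 : ℕ) : ZMod p) := by
        rw [e2]; exact cast_mulp_sub p 2 (l1 + l2) (by omega)
      have c3 : (((p - l1) + (p - l2) + (p - l3) : ℕ) : ZMod p)
          = -((l1 + l2 + l3 : ℕ) : ZMod p) := by
        rw [e3]; exact cast_mulp_sub p 3 (l1 + l2 + l3) (by omega)
      have d1 : p ∣ (p - l1) ↔ p ∣ l1 := by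
        rw [e1]; exact dvd_mulp_sub_iff p 1 l1 (by omega)
      have d2 : p ∣ ((p - l1) + (p - l2)) ↔ p ∣ (l1 + l2) := by
        rw [e2]; exact dvd_mulp_sub_iff p 2 (l1 + l2) (by omega)
      have d3 : p ∣ ((p - l1) + (p - l2) + (p - l3)) ↔ p ∣ (l1 + l2 + l3) := by
        rw [e3]; exact dvd_mulp_sub_iff p 3 (l1 + l2 + l3) (by omega)
      have hcond : (p < (p - l1) + (p - l2) + (p - l3)
            ∧ (p - l1) + (p - l2) + (p - l3) < 2 * p ∧ ¬ p ∣ (p - l1)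
            ∧ ¬ p ∣ ((p - l1) + (p - l2)) ∧ ¬ p ∣ ((p - l1) + (p - l2) + (p - l3)))
          ↔ (p < l1 + l2 + l3 ∧ l1 + l2 + l3 < 2 * p ∧ ¬ p ∣ l1
            ∧ ¬ p ∣ (l1 + l2) ∧ ¬ p ∣ (l1 + l2 + l3)) := by
        rw [d1, d2, d3]
        constructor <;> rintro ⟨A, B, C⟩ <;> exact ⟨by omega, by omega, C⟩
      by_cases hc : p < l1 + l2 + l3 ∧ l1 + l2 + l3 < 2 * p ∧ ¬ p ∣ l1
          ∧ ¬ p ∣ (l1 + l2) ∧ ¬ p ∣ (l1 + l2 + l3)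
      · rw [if_pos hc, if_pos (hcond.mpr hc), c1, c2, c3]
        simp only [inv_neg]
        ring
      · rw [if_neg hc, if_neg (fun h => hc (hcond.mp h))]
        exact zero_add 0
    · intro a ha _
      subst hs
      simp only [Finset.mem_product, Finset.mem_Ico] at ha
      intro h
      have := congrArg Prod.fst h
      simp only at this
      omega
    · intro a ha
      subst hs
      simp only [Finset.mem_product, Finset.mem_Ico] at ha ⊢
      omega
    · intro a ha
      subst hs
      simp only [Finset.mem_product, Finset.mem_Ico] at ha
      ext <;> simp <;> omega
  have := key ((Ico 1 p) ×ˢ (Ico 1 p) ×ˢ (Ico 1 p)) rfl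
  rw [Finset.sum_product] at this
  simpa [Finset.sum_product] using this
end

section
/- For every prime p > 3 and positive integer n < p, the telescoping recurrence F_k(t) = F_{k+1}(t) + £^{OY}_{(1)^n}(t) - (\sum_{i=1}^{n-k-1} Z^{(i)}((1)^{n-k-2},2) t^{ip}) £^{OY}_{(1)^k}(t) - (\sum_{i=1}^{n-k-2} Z^{(i)}((1)^{n-k-2}) t^{ip}) £^{OY}_{(2,(1)^k)}(t) holds in (ZMod p)[t] for 0 \le k \le n-2, where F_k(t) := £^{OY}((1)^{n-k-1}; (1); (1)^k; t) is the mixed finite multiple polylogarithm of type ((1)^{n-k-1}, (1), (1)^k). -/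
open Polynomial Finset

/-- The finite multiple polylogarithm of Ono–Yamamoto type £^OY_k(t) for an index
`k : Fin r → ℕ`, as a polynomial over `ZMod p`. The sum ranges over tuples
`l` with `0 < lᵢ < p` such that every partial sum `l₁ + ⋯ + lⱼ` is prime to `p`. -/
noncomputable def OY (p r : ℕ) (k : Fin r → ℕ) : Polynomial (ZMod p) :=
  ∑ l ∈ Fintype.piFinset (fun _ : Fin r => Finset.Ico 1 p),
    if ∀ j : Fin r, ¬ p ∣ ∑ i ∈ Finset.Iic j, l i then
      C (∏ j : Fin r, (((∑ i ∈ Finset.Iic j, l i : ℕ) : ZMod p)⁻¹) ^ k j) * X ^ (∑ i, l i)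
    else 0

/-- The variant `Z^(i)(k)` of finite multiple zeta values: the sum over tuples with
`(i-1)p < l₁ + ⋯ + l_r < i p` and all partial sums prime to `p`. -/
noncomputable def Zi (p r : ℕ) (k : Fin r → ℕ) (i : ℕ) : ZMod p :=
  ∑ l ∈ Fintype.piFinset (fun _ : Fin r => Finset.Ico 1 p),
    if (i - 1) * p < (∑ j, l j) ∧ (∑ j, l j) < i * p
        ∧ (∀ j : Fin r, ¬ p ∣ ∑ i' ∈ Finset.Iic j, l i') then
      ∏ j : Fin r, (((∑ i' ∈ Finset.Iic j, l i' : ℕ) : ZMod p)⁻¹) ^ k j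
    else 0

/-- Mixed finite multiple polylogarithm £^OY(λ; μ; ν; t) of Ono–Yamamoto. -/
noncomputable def OYmixed (p a b c : ℕ) (lam : Fin a → ℕ) (mu : Fin b → ℕ) (nu : Fin c → ℕ) :
    Polynomial (ZMod p) :=
  ∑ l ∈ Fintype.piFinset (fun _ : Fin a => Finset.Ico 1 p),
    ∑ m ∈ Fintype.piFinset (fun _ : Fin b => Finset.Ico 1 p),
      ∑ n ∈ Fintype.piFinset (fun _ : Fin c => Finset.Ico 1 p),
        if (∀ x : Fin a, ¬ p ∣ ∑ i ∈ Finset.Iic x, l i) ∧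
            (∀ y : Fin b, ¬ p ∣ ∑ i ∈ Finset.Iic y, m i) ∧
            (∀ z : Fin c, ¬ p ∣ ((∑ i, l i) + (∑ i, m i) + ∑ i ∈ Finset.Iic z, n i)) then
          C ((∏ x : Fin a, (((∑ i ∈ Finset.Iic x, l i : ℕ) : ZMod p)⁻¹) ^ lam x) *
              (∏ y : Fin b, (((∑ i ∈ Finset.Iic y, m i : ℕ) : ZMod p)⁻¹) ^ mu y) *
              (∏ z : Fin c,
                ((((∑ i, l i) + (∑ i, m i) + ∑ i ∈ Finset.Iic z, n i : ℕ) : ZMod p)⁻¹) ^ nu z))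
            * X ^ ((∑ i, l i) + (∑ i, m i) + ∑ i, n i)
        else 0

namespace Tele

def PS {r : ℕ} (v : Fin r → ℕ) (j : Fin r) : ℕ := ∑ i ∈ Finset.Iic j, v i

lemma PS_eq {r : ℕ} (v : Fin r → ℕ) (j : Fin r) :
    PS v j = ∑ i : Fin r, if i ≤ j then v i else 0 := by
  rw [PS, ← Finset.sum_filter]
  congr 1
  ext i
  simp

lemma PS_snoc_castSucc {r : ℕ} (l : Fin r → ℕ) (x : ℕ) (j : Fin r) :
    PS (Fin.snoc l x) (Fin.castSucc j) = PS l j := by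
  rw [PS_eq, PS_eq, Fin.sum_univ_castSucc]
  have h : ¬ (Fin.last r ≤ Fin.castSucc j) := by
    simp only [Fin.le_def, Fin.val_last, Fin.coe_castSucc]
    omega
  simp [h, Fin.castSucc_le_castSucc_iff]

lemma PS_last {r : ℕ} (l : Fin (r+1) → ℕ) :
    PS l (Fin.last r) = ∑ i, l i := by
  rw [PS_eq]
  apply Finset.sum_congr rfl
  intro i _
  simp [Fin.le_last]

lemma PS_snoc_last {r : ℕ} (l : Fin r → ℕ) (x : ℕ) :
    PS (Fin.snoc l x) (Fin.last r) = (∑ i, l i) + x := by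
  rw [PS_last, Fin.sum_univ_castSucc]
  simp

lemma PS_cons_zero {r : ℕ} (x : ℕ) (w : Fin r → ℕ) :
    PS (Fin.cons x w) 0 = x := by
  rw [PS_eq, Fin.sum_univ_succ]
  simp [Fin.le_zero_iff, Fin.succ_ne_zero]

lemma PS_cons_succ {r : ℕ} (x : ℕ) (w : Fin r → ℕ) (j : Fin r) :
    PS (Fin.cons x w) (Fin.succ j) = x + PS w j := by
  rw [PS_eq, PS_eq, Fin.sum_univ_succ]
  simp [Fin.succ_le_succ_iff, Fin.zero_le]

lemma PS_append_left {A B : ℕ} (u : Fin A → ℕ) (w : Fin B → ℕ) (j : Fin A) :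
    PS (Fin.append u w) (Fin.castAdd B j) = PS u j := by
  rw [PS_eq, PS_eq, Fin.sum_univ_add]
  have h2 : ∀ i : Fin B, ¬ (Fin.natAdd A i ≤ Fin.castAdd B j) := by
    intro i
    simp only [Fin.le_def, Fin.coe_natAdd, Fin.coe_castAdd]
    omega
  simp only [Fin.append_left, Fin.append_right]
  have hz : (∑ i : Fin B, if Fin.natAdd A i ≤ Fin.castAdd B j then w i else 0) = 0 :=
    Finset.sum_eq_zero (fun i _ => by rw [if_neg (h2 i)])
  rw [hz, add_zero]
  apply Finset.sum_congr rfl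
  intro i _
  have : Fin.castAdd B i ≤ Fin.castAdd B j ↔ i ≤ j := by
    simp only [Fin.le_def, Fin.coe_castAdd]
  simp [this]

lemma PS_append_right {A B : ℕ} (u : Fin A → ℕ) (w : Fin B → ℕ) (j : Fin B) :
    PS (Fin.append u w) (Fin.natAdd A j) = (∑ i, u i) + PS w j := by
  rw [PS_eq, PS_eq, Fin.sum_univ_add]
  simp only [Fin.append_left, Fin.append_right]
  congr 1
  · apply Finset.sum_congr rfl
    intro i _
    have : Fin.castAdd B i ≤ Fin.natAdd A j := by
      simp only [Fin.le_def, Fin.coe_natAdd, Fin.coe_castAdd]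
      omega
    simp [this]
  · apply Finset.sum_congr rfl
    intro i _
    have : Fin.natAdd A i ≤ Fin.natAdd A j ↔ i ≤ j := by
      simp only [Fin.le_def, Fin.coe_natAdd]
      omega
    simp [this]

lemma PS_fin_one (m : Fin 1 → ℕ) (j : Fin 1) : PS m j = m 0 := by
  rw [Subsingleton.elim j 0, PS_eq, Fin.sum_univ_one]
  simp

variable {M : Type*} [AddCommMonoid M]

lemma sum_piFinset_cons {r : ℕ} (s : Finset ℕ) (f : (Fin (r+1) → ℕ) → M) :
    ∑ v ∈ Fintype.piFinset (fun _ : Fin (r+1) => s), f v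
      = ∑ x ∈ s, ∑ w ∈ Fintype.piFinset (fun _ : Fin r => s), f (Fin.cons x w) := by
  rw [← Finset.sum_product']
  apply Finset.sum_nbij' (i := fun v => ((v 0 : ℕ), Fin.tail v))
    (j := fun q => Fin.cons q.1 q.2)
  · intro v hv
    simp only [Fintype.mem_piFinset] at hv
    simp only [Finset.mem_product, Fintype.mem_piFinset]
    exact ⟨hv 0, fun i => hv i.succ⟩
  · intro q hq
    simp only [Finset.mem_product, Fintype.mem_piFinset] at hq
    simp only [Fintype.mem_piFinset]
    intro i
    refine Fin.cases ?_ ?_ i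
    · simpa using hq.1
    · intro j; simpa using hq.2 j
  · intro v _; exact Fin.cons_self_tail v
  · intro q _; simp [Fin.tail_cons]
  · intro v _; rw [Fin.cons_self_tail]

lemma sum_piFinset_snoc {r : ℕ} (s : Finset ℕ) (f : (Fin (r+1) → ℕ) → M) :
    ∑ v ∈ Fintype.piFinset (fun _ : Fin (r+1) => s), f v
      = ∑ w ∈ Fintype.piFinset (fun _ : Fin r => s), ∑ x ∈ s, f (Fin.snoc w x) := by
  rw [← Finset.sum_product']
  apply Finset.sum_nbij' (i := fun v => (Fin.init v, v (Fin.last r)))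
    (j := fun q => Fin.snoc q.1 q.2)
  · intro v hv
    simp only [Fintype.mem_piFinset] at hv
    simp only [Finset.mem_product, Fintype.mem_piFinset]
    exact ⟨fun i => hv i.castSucc, hv (Fin.last r)⟩
  · intro q hq
    simp only [Finset.mem_product, Fintype.mem_piFinset] at hq
    simp only [Fintype.mem_piFinset]
    intro i
    refine Fin.lastCases ?_ ?_ i
    · simpa using hq.2
    · intro j; simpa using hq.1 j
  · intro v _; exact Fin.snoc_init_self v
  · intro q _; simp [Fin.init_snoc]
  · intro v _; rw [Fin.snoc_init_self]

lemma split_sum (p S r : ℕ) (hp : 2 ≤ p) (hS : S ≤ r * (p - 1)) (f : ℕ → M) :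
    (∑ x ∈ Finset.Ico 1 p, if p ∣ (S + x) then f (S + x) else 0)
      = ∑ i ∈ Finset.Icc 1 r, if (i - 1) * p < S ∧ S < i * p then f (i * p) else 0 := by
  rw [← Finset.sum_filter, ← Finset.sum_filter]
  apply Finset.sum_nbij' (i := fun x => (S + x) / p) (j := fun i => i * p - S)
  · intro x hx
    simp only [Finset.mem_filter, Finset.mem_Ico] at hx
    obtain ⟨⟨hx1, hx2⟩, c, hc⟩ := hx
    have hdiv : (S + x) / p = c := by rw [hc, Nat.mul_div_cancel_left _ (by omega)]
    rw [hdiv]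
    simp only [Finset.mem_filter, Finset.mem_Icc]
    have hc1 : 1 ≤ c := by
      rcases c with _ | c
      · simp at hc; omega
      · omega
    have hcr : c ≤ r := by
      have h1 : p * c ≤ p * r + (p - 1) := by
        have h2 : r * (p - 1) ≤ r * p := Nat.mul_le_mul_left r (by omega)
        have h3 : r * p = p * r := mul_comm r p
        omega
      by_contra hcon
      have : p * (r + 1) ≤ p * c := Nat.mul_le_mul_left p (by omega)
      have h4 : p * (r + 1) = p * r + p := by ring
      omega
    have h5 : (c - 1) * p = p * c - p := by rw [Nat.sub_mul, one_mul, mul_comm]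
    have h6 : c * p = p * c := mul_comm c p
    have h7 : p ≤ p * c := Nat.le_mul_of_pos_right p (by omega)
    refine ⟨⟨hc1, hcr⟩, ?_, ?_⟩ <;> omega
  · intro i hi
    simp only [Finset.mem_filter, Finset.mem_Icc] at hi
    obtain ⟨⟨hi1, hir⟩, hlt1, hlt2⟩ := hi
    simp only [Finset.mem_filter, Finset.mem_Ico]
    have h5 : (i - 1) * p = i * p - p := by rw [Nat.sub_mul, one_mul]
    have h7 : p ≤ i * p := by
      calc p = 1 * p := (one_mul p).symm
      _ ≤ i * p := Nat.mul_le_mul_right p hi1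
    refine ⟨⟨by omega, by omega⟩, ?_⟩
    have : S + (i * p - S) = i * p := by omega
    rw [this]
    exact dvd_mul_left p i
  · intro x hx
    simp only [Finset.mem_filter, Finset.mem_Ico] at hx
    obtain ⟨⟨hx1, hx2⟩, c, hc⟩ := hx
    have hdiv : (S + x) / p = c := by rw [hc, Nat.mul_div_cancel_left _ (by omega)]
    rw [hdiv, mul_comm c p]
    omega
  · intro i hi
    simp only [Finset.mem_filter, Finset.mem_Icc] at hi
    obtain ⟨⟨hi1, hir⟩, hlt1, hlt2⟩ := hi
    have : S + (i * p - S) = i * p := by omega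
    rw [this, Nat.mul_div_cancel _ (by omega)]
  · intro x hx
    simp only [Finset.mem_filter, Finset.mem_Ico] at hx
    obtain ⟨⟨hx1, hx2⟩, c, hc⟩ := hx
    have hdiv : (S + x) / p = c := by rw [hc, Nat.mul_div_cancel_left _ (by omega)]
    rw [hdiv, mul_comm c p, ← hc]

lemma cast_inv_zero {p : ℕ} [NeZero p] {d : ℕ} (h : p ∣ d) : ((d : ℕ) : ZMod p)⁻¹ = 0 := by
  have : ((d : ℕ) : ZMod p) = 0 := (ZMod.natCast_eq_zero_iff d p).mpr h
  rw [this]; exact ZMod.inv_zero p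

lemma cast_ne_zero {p : ℕ} [NeZero p] {m : ℕ} (h1 : 1 ≤ m) (h2 : m < p) :
    ((m : ℕ) : ZMod p) ≠ 0 := by
  rw [Ne, ZMod.natCast_eq_zero_iff]
  exact Nat.not_dvd_of_pos_of_lt (by omega) h2

variable {M : Type*} [AddCommMonoid M]

lemma sum_piFinset_one (s : Finset ℕ) (f : (Fin 1 → ℕ) → M) :
    ∑ v ∈ Fintype.piFinset (fun _ : Fin 1 => s), f v = ∑ x ∈ s, f (fun _ => x) := by
  apply Finset.sum_nbij' (i := fun v => v 0) (j := fun x => (fun _ => x))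
  · intro v hv; simp only [Fintype.mem_piFinset] at hv; exact hv 0
  · intro x hx; simp only [Fintype.mem_piFinset]; intro i; exact hx
  · intro v _; funext i; rw [Subsingleton.elim i 0]
  · intro x _; rfl
  · intro v _; congr 1; funext i; rw [Subsingleton.elim i 0]

lemma sum_piFinset_append {A B : ℕ} (s : Finset ℕ) (f : (Fin (A + B) → ℕ) → M) :
    ∑ v ∈ Fintype.piFinset (fun _ : Fin (A + B) => s), f v
      = ∑ u ∈ Fintype.piFinset (fun _ : Fin A => s),
          ∑ w ∈ Fintype.piFinset (fun _ : Fin B => s), f (Fin.append u w) := by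
  rw [← Finset.sum_product']
  apply Finset.sum_nbij'
    (i := fun v => ((fun i => v (Fin.castAdd B i)), (fun i => v (Fin.natAdd A i))))
    (j := fun q => Fin.append q.1 q.2)
  · intro v hv
    simp only [Fintype.mem_piFinset] at hv
    simp only [Finset.mem_product, Fintype.mem_piFinset]
    exact ⟨fun i => hv _, fun i => hv _⟩
  · intro q hq
    simp only [Finset.mem_product, Fintype.mem_piFinset] at hq
    simp only [Fintype.mem_piFinset]
    intro i
    refine Fin.addCases ?_ ?_ i
    · intro j; rw [Fin.append_left]; exact hq.1 j
    · intro j; rw [Fin.append_right]; exact hq.2 j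
  · intro v _
    funext i
    refine Fin.addCases ?_ ?_ i
    · intro j; rw [Fin.append_left]
    · intro j; rw [Fin.append_right]
  · rintro ⟨u, w⟩ _
    simp only [Prod.mk.injEq]
    constructor
    · funext j; rw [Fin.append_left]
    · funext j; rw [Fin.append_right]
  · intro v _
    congr 1
    funext i
    refine Fin.addCases ?_ ?_ i
    · intro j; rw [Fin.append_left]
    · intro j; rw [Fin.append_right]

lemma sum_snoc {r : ℕ} (l : Fin r → ℕ) (x : ℕ) :
    ∑ i, (Fin.snoc l x : Fin (r+1) → ℕ) i = (∑ i, l i) + x := by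
  rw [Fin.sum_univ_castSucc]; simp

lemma sum_cons {r : ℕ} (x : ℕ) (w : Fin r → ℕ) :
    ∑ i, (Fin.cons x w : Fin (r+1) → ℕ) i = x + ∑ i, w i := by
  rw [Fin.sum_univ_succ]; simp

lemma sum_append {A B : ℕ} (u : Fin A → ℕ) (w : Fin B → ℕ) :
    ∑ i, (Fin.append u w) i = (∑ i, u i) + ∑ i, w i := by
  rw [Fin.sum_univ_add]; simp

lemma OY_eq (p r : ℕ) [NeZero p] (k : Fin r → ℕ) (hk : ∀ j, k j ≠ 0) :
    OY p r k = ∑ l ∈ Fintype.piFinset (fun _ : Fin r => Finset.Ico 1 p),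
      C (∏ j : Fin r, ((PS l j : ℕ) : ZMod p)⁻¹ ^ k j) * X ^ (∑ i, l i) := by
  unfold OY
  apply Finset.sum_congr rfl
  intro l _
  by_cases h : ∀ j : Fin r, ¬ p ∣ ∑ i ∈ Finset.Iic j, l i
  · rw [if_pos h]; rfl
  · rw [if_neg h]
    push_neg at h
    obtain ⟨j, hj⟩ := h
    have h0 : ((PS l j : ℕ) : ZMod p)⁻¹ = 0 := cast_inv_zero hj
    have hz : (∏ j : Fin r, ((PS l j : ℕ) : ZMod p)⁻¹ ^ k j) = 0 :=
      Finset.prod_eq_zero (Finset.mem_univ j) (by rw [h0]; exact zero_pow (hk j))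
    rw [hz, map_zero, zero_mul]

lemma Zi_eq (p r : ℕ) [NeZero p] (k : Fin r → ℕ) (hk : ∀ j, k j ≠ 0) (i : ℕ) :
    Zi p r k i = ∑ l ∈ Fintype.piFinset (fun _ : Fin r => Finset.Ico 1 p),
      if (i - 1) * p < (∑ j, l j) ∧ (∑ j, l j) < i * p then
        ∏ j : Fin r, ((PS l j : ℕ) : ZMod p)⁻¹ ^ k j
      else 0 := by
  unfold Zi
  apply Finset.sum_congr rfl
  intro l _
  by_cases hr : (i - 1) * p < (∑ j, l j) ∧ (∑ j, l j) < i * p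
  · rw [if_pos hr]
    by_cases h : ∀ j : Fin r, ¬ p ∣ ∑ i' ∈ Finset.Iic j, l i'
    · rw [if_pos ⟨hr.1, hr.2, h⟩]; rfl
    · rw [if_neg (by tauto)]
      push_neg at h
      obtain ⟨j, hj⟩ := h
      have h0 : ((PS l j : ℕ) : ZMod p)⁻¹ = 0 := cast_inv_zero hj
      exact (Finset.prod_eq_zero (Finset.mem_univ j)
        (by rw [h0]; exact zero_pow (hk j))).symm
  · rw [if_neg hr, if_neg (by tauto)]

lemma OYmixed_eq (p a b c : ℕ) [NeZero p] (lam : Fin a → ℕ) (mu : Fin b → ℕ) (nu : Fin c → ℕ)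
    (hl : ∀ x, lam x ≠ 0) (hm : ∀ y, mu y ≠ 0) (hn : ∀ z, nu z ≠ 0) :
    OYmixed p a b c lam mu nu =
      ∑ l ∈ Fintype.piFinset (fun _ : Fin a => Finset.Ico 1 p),
        ∑ m ∈ Fintype.piFinset (fun _ : Fin b => Finset.Ico 1 p),
          ∑ n ∈ Fintype.piFinset (fun _ : Fin c => Finset.Ico 1 p),
            C ((∏ x : Fin a, ((PS l x : ℕ) : ZMod p)⁻¹ ^ lam x) *
                (∏ y : Fin b, ((PS m y : ℕ) : ZMod p)⁻¹ ^ mu y) *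
                (∏ z : Fin c,
                  ((((∑ i, l i) + (∑ i, m i) + PS n z : ℕ) : ZMod p)⁻¹) ^ nu z))
              * X ^ ((∑ i, l i) + (∑ i, m i) + ∑ i, n i) := by
  unfold OYmixed
  apply Finset.sum_congr rfl
  intro l _
  apply Finset.sum_congr rfl
  intro m _
  apply Finset.sum_congr rfl
  intro n _
  by_cases h : (∀ x : Fin a, ¬ p ∣ ∑ i ∈ Finset.Iic x, l i) ∧
      (∀ y : Fin b, ¬ p ∣ ∑ i ∈ Finset.Iic y, m i) ∧
      (∀ z : Fin c, ¬ p ∣ ((∑ i, l i) + (∑ i, m i) + ∑ i ∈ Finset.Iic z, n i))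
  · rw [if_pos h]; rfl
  · rw [if_neg h]
    have hz : ((∏ x : Fin a, ((PS l x : ℕ) : ZMod p)⁻¹ ^ lam x) *
        (∏ y : Fin b, ((PS m y : ℕ) : ZMod p)⁻¹ ^ mu y) *
        (∏ z : Fin c,
          ((((∑ i, l i) + (∑ i, m i) + PS n z : ℕ) : ZMod p)⁻¹) ^ nu z)) = 0 := by
      rcases Decidable.not_and_iff_or_not.mp h with h1 | h23
      · push_neg at h1
        obtain ⟨x, hx⟩ := h1
        apply mul_eq_zero_of_left
        apply mul_eq_zero_of_left
        have h0 : ((PS l x : ℕ) : ZMod p)⁻¹ = 0 := cast_inv_zero hx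
        exact Finset.prod_eq_zero (Finset.mem_univ x) (by rw [h0]; exact zero_pow (hl x))
      rcases Decidable.not_and_iff_or_not.mp h23 with h2 | h3
      · push_neg at h2
        obtain ⟨y, hy⟩ := h2
        apply mul_eq_zero_of_left
        apply mul_eq_zero_of_right
        have h0 : ((PS m y : ℕ) : ZMod p)⁻¹ = 0 := cast_inv_zero hy
        exact Finset.prod_eq_zero (Finset.mem_univ y) (by rw [h0]; exact zero_pow (hm y))
      · push_neg at h3
        obtain ⟨z, hzz⟩ := h3
        apply mul_eq_zero_of_right
        have h0 : ((((∑ i, l i) + (∑ i, m i) + PS n z : ℕ)) : ZMod p)⁻¹ = 0 := cast_inv_zero hzz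
        exact Finset.prod_eq_zero (Finset.mem_univ z) (by rw [h0]; exact zero_pow (hn z))
    rw [hz, map_zero, zero_mul]


section Bridges

variable (p : ℕ)

noncomputable def f1 (a k : ℕ) (l : Fin (a+1) → ℕ) (m0 : ℕ) (nn : Fin k → ℕ) :
    Polynomial (ZMod p) :=
  C ((∏ x : Fin (a+1), ((PS l x : ℕ) : ZMod p)⁻¹) * ((m0 : ℕ) : ZMod p)⁻¹ *
      ∏ z : Fin k, ((((∑ i, l i) + m0 + PS nn z : ℕ) : ZMod p)⁻¹))
    * X ^ ((∑ i, l i) + m0 + ∑ i, nn i)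

noncomputable def f2 (a k : ℕ) (l : Fin (a+1) → ℕ) (m0 : ℕ) (nn : Fin k → ℕ) :
    Polynomial (ZMod p) :=
  C ((∏ x : Fin a, ((PS l (Fin.castSucc x) : ℕ) : ZMod p)⁻¹) * ((m0 : ℕ) : ZMod p)⁻¹ *
      ((((∑ i, l i) + m0 : ℕ) : ZMod p)⁻¹ *
        ∏ z : Fin k, ((((∑ i, l i) + m0 + PS nn z : ℕ) : ZMod p)⁻¹)))
    * X ^ ((∑ i, l i) + m0 + ∑ i, nn i)

noncomputable def f3 (a k : ℕ) (l : Fin (a+1) → ℕ) (m0 : ℕ) (nn : Fin k → ℕ) :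
    Polynomial (ZMod p) :=
  C ((∏ x : Fin (a+1), ((PS l x : ℕ) : ZMod p)⁻¹) * ((((∑ i, l i) + m0 : ℕ) : ZMod p)⁻¹) *
      ∏ z : Fin k, ((((∑ i, l i) + m0 + PS nn z : ℕ) : ZMod p)⁻¹))
    * X ^ ((∑ i, l i) + m0 + ∑ i, nn i)

noncomputable def f4 (a k : ℕ) (l : Fin (a+1) → ℕ) (m0 : ℕ) (nn : Fin k → ℕ) :
    Polynomial (ZMod p) :=
  if p ∣ ((∑ i, l i) + m0) then
    C (((∏ x : Fin a, ((PS l (Fin.castSucc x) : ℕ) : ZMod p)⁻¹) *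
          (((∑ i, l i : ℕ) : ZMod p)⁻¹) ^ 2) *
        ∏ z : Fin k, ((PS nn z : ℕ) : ZMod p)⁻¹)
      * X ^ ((∑ i, l i) + m0 + ∑ i, nn i)
  else 0

noncomputable def f5 (a k : ℕ) (l : Fin (a+1) → ℕ) (m0 : ℕ) (nn : Fin k → ℕ) :
    Polynomial (ZMod p) :=
  if p ∣ (∑ i, l i) then
    C ((∏ x : Fin a, ((PS l (Fin.castSucc x) : ℕ) : ZMod p)⁻¹) *
        (((m0 : ℕ) : ZMod p)⁻¹ ^ 2 * ∏ z : Fin k, (((m0 + PS nn z : ℕ) : ZMod p)⁻¹)))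
      * X ^ ((∑ i, l i) + m0 + ∑ i, nn i)
  else 0

lemma inv_cast_congr {q : ℕ} {u v : ℕ} (h : u = v) :
    ((u : ℕ) : ZMod q)⁻¹ = ((v : ℕ) : ZMod q)⁻¹ := by rw [h]

lemma sum_bound {r : ℕ} {l : Fin r → ℕ}
    (hl : l ∈ Fintype.piFinset (fun _ : Fin r => Finset.Ico 1 p)) :
    ∑ i, l i ≤ r * (p - 1) := by
  simp only [Fintype.mem_piFinset, Finset.mem_Ico] at hl
  calc ∑ i, l i ≤ ∑ _i : Fin r, (p - 1) :=
        Finset.sum_le_sum (fun i _ => by have := hl i; omega)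
  _ = r * (p - 1) := by simp [Finset.sum_const, Finset.card_univ, mul_comm]

variable [NeZero p]

lemma B1 (a k : ℕ) :
    OYmixed p (a+1) 1 k (fun _ => 1) (fun _ => 1) (fun _ => 1)
      = ∑ l ∈ Fintype.piFinset (fun _ : Fin (a+1) => Finset.Ico 1 p),
          ∑ m0 ∈ Finset.Ico 1 p,
            ∑ nn ∈ Fintype.piFinset (fun _ : Fin k => Finset.Ico 1 p),
              f1 p a k l m0 nn := by
  rw [OYmixed_eq p (a+1) 1 k _ _ _ (fun _ => one_ne_zero) (fun _ => one_ne_zero)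
    (fun _ => one_ne_zero)]
  apply Finset.sum_congr rfl
  intro l _
  rw [sum_piFinset_one]
  apply Finset.sum_congr rfl
  intro m0 _
  apply Finset.sum_congr rfl
  intro nn _
  simp only [f1, pow_one, PS_fin_one, Fin.prod_univ_one, Fin.sum_univ_one]

lemma B2 (a k : ℕ) :
    OYmixed p a 1 (k+1) (fun _ => 1) (fun _ => 1) (fun _ => 1)
      = ∑ l ∈ Fintype.piFinset (fun _ : Fin (a+1) => Finset.Ico 1 p),
          ∑ m0 ∈ Finset.Ico 1 p,
            ∑ nn ∈ Fintype.piFinset (fun _ : Fin k => Finset.Ico 1 p),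
              f2 p a k l m0 nn := by
  rw [OYmixed_eq p a 1 (k+1) _ _ _ (fun _ => one_ne_zero) (fun _ => one_ne_zero)
    (fun _ => one_ne_zero)]
  rw [show (∑ l ∈ Fintype.piFinset (fun _ : Fin (a+1) => Finset.Ico 1 p),
          ∑ m0 ∈ Finset.Ico 1 p,
            ∑ nn ∈ Fintype.piFinset (fun _ : Fin k => Finset.Ico 1 p),
              f2 p a k l m0 nn)
      = ∑ l' ∈ Fintype.piFinset (fun _ : Fin a => Finset.Ico 1 p),
          ∑ x ∈ Finset.Ico 1 p,
            ∑ m0 ∈ Finset.Ico 1 p,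
              ∑ nn ∈ Fintype.piFinset (fun _ : Fin k => Finset.Ico 1 p),
                f2 p a k (Fin.snoc l' x) m0 nn
    from sum_piFinset_snoc _ _]
  apply Finset.sum_congr rfl
  intro l' _
  rw [sum_piFinset_one]
  simp only [sum_piFinset_cons]
  rw [Finset.sum_comm]
  apply Finset.sum_congr rfl
  intro x _
  apply Finset.sum_congr rfl
  intro m0 _
  apply Finset.sum_congr rfl
  intro nn _
  simp only [f2, pow_one, PS_fin_one, Fin.prod_univ_one, Fin.sum_univ_one,
    PS_snoc_castSucc, sum_snoc, sum_cons, Fin.prod_univ_succ, PS_cons_zero, PS_cons_succ,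
    Fin.cons_zero, Fin.cons_succ, Finset.univ_eq_empty, Finset.prod_empty, mul_one]
  congr 1
  · congr 1
    congr 1
    congr 1
    · apply inv_cast_congr; omega
    · refine Finset.prod_congr rfl (fun z _ => ?_); apply inv_cast_congr; omega
  · congr 1
    omega


lemma B3 (a k : ℕ) :
    OY p (a+1+1+k) (fun _ => 1)
      = ∑ l ∈ Fintype.piFinset (fun _ : Fin (a+1) => Finset.Ico 1 p),
          ∑ m0 ∈ Finset.Ico 1 p,
            ∑ nn ∈ Fintype.piFinset (fun _ : Fin k => Finset.Ico 1 p),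
              f3 p a k l m0 nn := by
  rw [OY_eq p _ _ (fun _ => one_ne_zero)]
  rw [sum_piFinset_append (A := a+1+1) (B := k) (Finset.Ico 1 p)]
  rw [sum_piFinset_snoc]
  apply Finset.sum_congr rfl
  intro l _
  apply Finset.sum_congr rfl
  intro m0 _
  apply Finset.sum_congr rfl
  intro nn _
  simp only [f3, pow_one, Fin.prod_univ_add, PS_append_left, PS_append_right, sum_append,
    Fin.prod_univ_castSucc, PS_snoc_castSucc, PS_snoc_last, sum_snoc]


lemma CXmul {R : Type*} [CommSemiring R] (w v : R) (s t : ℕ) :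
    (C w * X ^ s) * (C v * X ^ t) = C (w * v) * (X : R[X]) ^ (s + t) := by
  rw [C_mul, pow_add]; ring

lemma sum_swap_inner {α β γ : Type*} {M : Type*} [AddCommMonoid M] (s : Finset α)
    (t : Finset β) (u : Finset γ) (f : α → β → γ → M) :
    (∑ x ∈ s, ∑ y ∈ t, ∑ z ∈ u, f x y z) = ∑ x ∈ s, ∑ z ∈ u, ∑ y ∈ t, f x y z :=
  Finset.sum_congr rfl (fun _ _ => Finset.sum_comm)

lemma B4 (hp2 : 2 ≤ p) (a k : ℕ) :
    (∑ i ∈ Finset.Icc 1 (a+1),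
        C (Zi p (a+1) (fun j => if (j : ℕ) = a then 2 else 1) i) * X ^ (i * p))
      * OY p k (fun _ => 1)
      = ∑ l ∈ Fintype.piFinset (fun _ : Fin (a+1) => Finset.Ico 1 p),
          ∑ m0 ∈ Finset.Ico 1 p,
            ∑ nn ∈ Fintype.piFinset (fun _ : Fin k => Finset.Ico 1 p),
              f4 p a k l m0 nn := by
  have hw : ∀ j : Fin (a+1), (if (j : ℕ) = a then 2 else 1) ≠ 0 := by
    intro j; split <;> norm_num
  rw [OY_eq p _ _ (fun _ => one_ne_zero), Finset.sum_mul_sum]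
  simp only [Zi_eq p (a+1) _ hw, map_sum, apply_ite C, map_zero, Finset.sum_mul,
    ite_mul, zero_mul, pow_one]
  rw [sum_swap_inner, Finset.sum_comm]
  apply Finset.sum_congr rfl
  intro l hl
  conv_rhs => rw [Finset.sum_comm]
  trans (∑ nn ∈ Fintype.piFinset (fun _ : Fin k => Finset.Ico 1 p),
      ∑ i ∈ Finset.Icc 1 (a+1),
        if (i - 1) * p < (∑ j, l j) ∧ (∑ j, l j) < i * p then
          C (((∏ x : Fin a, ((PS l (Fin.castSucc x) : ℕ) : ZMod p)⁻¹) *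
                (((∑ i, l i : ℕ) : ZMod p)⁻¹) ^ 2) *
              ∏ z : Fin k, ((PS nn z : ℕ) : ZMod p)⁻¹)
            * X ^ (i * p + ∑ i, nn i)
        else 0)
  · rw [Finset.sum_comm]
    apply Finset.sum_congr rfl
    intro nn _
    apply Finset.sum_congr rfl
    intro i _
    by_cases hc : (i - 1) * p < (∑ j, l j) ∧ (∑ j, l j) < i * p
    · rw [if_pos hc, if_pos hc, CXmul]
      have hW : (∏ j : Fin (a+1), ((PS l j : ℕ) : ZMod p)⁻¹ ^ (if (j : ℕ) = a then 2 else 1))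
          = (∏ x : Fin a, ((PS l (Fin.castSucc x) : ℕ) : ZMod p)⁻¹) *
              (((∑ i, l i : ℕ) : ZMod p)⁻¹) ^ 2 := by
        rw [Fin.prod_univ_castSucc]
        congr 1
        · apply Finset.prod_congr rfl
          intro x _
          rw [if_neg (by rw [Fin.coe_castSucc]; exact Nat.ne_of_lt x.isLt), pow_one]
        · rw [if_pos (by rw [Fin.val_last]), PS_last]
      rw [hW, mul_assoc]
    · rw [if_neg hc, if_neg hc]
  · apply Finset.sum_congr rfl
    intro nn hnn
    have hss := split_sum p (∑ i, l i) (a+1) hp2 (sum_bound p hl)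
        (fun T => C (((∏ x : Fin a, ((PS l (Fin.castSucc x) : ℕ) : ZMod p)⁻¹) *
            (((∑ i, l i : ℕ) : ZMod p)⁻¹) ^ 2) *
          ∏ z : Fin k, ((PS nn z : ℕ) : ZMod p)⁻¹) * X ^ (T + ∑ i, nn i))
    simp only [f4]
    exact hss.symm


lemma sum_swap_inner4 {α β γ δ : Type*} {M : Type*} [AddCommMonoid M] (s : Finset α)
    (t : Finset β) (u : Finset γ) (v : Finset δ) (f : α → β → γ → δ → M) :
    (∑ x ∈ s, ∑ y ∈ t, ∑ z ∈ u, ∑ w ∈ v, f x y z w)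
      = ∑ x ∈ s, ∑ y ∈ t, ∑ w ∈ v, ∑ z ∈ u, f x y z w :=
  Finset.sum_congr rfl (fun _ _ => Finset.sum_congr rfl (fun _ _ => Finset.sum_comm))

lemma B5 (hp2 : 2 ≤ p) (a k : ℕ) :
    (∑ i ∈ Finset.Icc 1 a, C (Zi p a (fun _ => 1) i) * X ^ (i * p))
      * OY p (k+1) (fun j => if (j : ℕ) = 0 then 2 else 1)
      = ∑ l ∈ Fintype.piFinset (fun _ : Fin (a+1) => Finset.Ico 1 p),
          ∑ m0 ∈ Finset.Ico 1 p,
            ∑ nn ∈ Fintype.piFinset (fun _ : Fin k => Finset.Ico 1 p),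
              f5 p a k l m0 nn := by
  have hw0 : ∀ j : Fin (k+1), (if (j : ℕ) = 0 then 2 else 1) ≠ 0 := by
    intro j; split <;> norm_num
  rw [OY_eq p _ _ hw0, sum_piFinset_cons, Finset.sum_mul_sum]
  simp only [Finset.mul_sum]
  simp only [Zi_eq p a _ (fun _ => one_ne_zero), map_sum, apply_ite C, map_zero,
    Finset.sum_mul, ite_mul, zero_mul, pow_one, sum_cons]
  rw [Finset.sum_comm]
  rw [sum_swap_inner]
  rw [sum_swap_inner4]
  rw [sum_swap_inner]
  rw [Finset.sum_comm]
  conv_rhs => rw [sum_piFinset_snoc]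
  apply Finset.sum_congr rfl
  intro l' hl'
  conv_rhs => rw [Finset.sum_comm]
  apply Finset.sum_congr rfl
  intro m0 hm0
  conv_rhs => rw [Finset.sum_comm]
  apply Finset.sum_congr rfl
  intro nn hnn
  simp only [f5, sum_snoc, PS_snoc_castSucc]
  rw [split_sum p (∑ i, l' i) a hp2 (sum_bound p hl')
      (fun T => C ((∏ x : Fin a, ((PS l' x : ℕ) : ZMod p)⁻¹) *
        (((m0 : ℕ) : ZMod p)⁻¹ ^ 2 * ∏ z : Fin k, (((m0 + PS nn z : ℕ) : ZMod p)⁻¹)))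
        * X ^ (T + m0 + ∑ i, nn i))]
  have hWc : (∏ j : Fin (k+1), ((PS (Fin.cons m0 nn) j : ℕ) : ZMod p)⁻¹
        ^ (if (j : ℕ) = 0 then 2 else 1))
      = ((m0 : ℕ) : ZMod p)⁻¹ ^ 2 * ∏ z : Fin k, (((m0 + PS nn z : ℕ) : ZMod p)⁻¹) := by
    rw [Fin.prod_univ_succ]
    refine congrArg₂ (· * ·) ?_ ?_
    · rw [PS_cons_zero]; norm_num
    · apply Finset.prod_congr rfl
      intro z _
      rw [PS_cons_succ, if_neg (by simp [Fin.val_succ]), pow_one]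
  apply Finset.sum_congr rfl
  intro i _
  by_cases hc : (i - 1) * p < (∑ j, l' j) ∧ (∑ j, l' j) < i * p
  · rw [if_pos hc, if_pos hc, CXmul, hWc, ← add_assoc]
  · rw [if_neg hc, if_neg hc]


lemma pointwise [Fact p.Prime] (a k : ℕ) (l : Fin (a+1) → ℕ) (m0 : ℕ)
    (nn : Fin k → ℕ) (hm1 : 1 ≤ m0) (hm2 : m0 < p) :
    f1 p a k l m0 nn + f4 p a k l m0 nn + f5 p a k l m0 nn
      = f2 p a k l m0 nn + f3 p a k l m0 nn := by
  have hβ : ((m0 : ℕ) : ZMod p) ≠ 0 := cast_ne_zero hm1 hm2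
  have hQ : (∏ x : Fin (a+1), ((PS l x : ℕ) : ZMod p)⁻¹)
      = (∏ x : Fin a, ((PS l (Fin.castSucc x) : ℕ) : ZMod p)⁻¹) *
          ((∑ i, l i : ℕ) : ZMod p)⁻¹ := by
    rw [Fin.prod_univ_castSucc, PS_last]
  simp only [f1, f2, f3, f4, f5, hQ]
  by_cases hα : p ∣ (∑ i, l i)
  · have hA0 : ((∑ i, l i : ℕ) : ZMod p) = 0 :=
      (ZMod.natCast_eq_zero_iff _ p).mpr hα
    have hγ : ¬ p ∣ ((∑ i, l i) + m0) := by
      intro h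
      have hdm : p ∣ m0 := by
        have := Nat.dvd_sub h hα
        rwa [Nat.add_sub_cancel_left] at this
      exact absurd hdm (Nat.not_dvd_of_pos_of_lt (by omega) hm2)
    rw [if_neg hγ, if_pos hα]
    have hRm : (∏ z : Fin k, (((∑ i, l i) + m0 + PS nn z : ℕ) : ZMod p)⁻¹)
        = ∏ z : Fin k, ((m0 + PS nn z : ℕ) : ZMod p)⁻¹ :=
      Finset.prod_congr rfl (fun z _ => by
        rw [show ((∑ i, l i) + m0 + PS nn z : ℕ) = (∑ i, l i) + (m0 + PS nn z) from by omega,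
          Nat.cast_add, hA0, zero_add])
    have hγm : (((∑ i, l i) + m0 : ℕ) : ZMod p) = ((m0 : ℕ) : ZMod p) := by
      rw [Nat.cast_add, hA0, zero_add]
    simp only [hRm, hγm, hA0, inv_zero]
    simp only [add_zero, zero_add]
    simp only [← add_mul]
    congr 1
    simp only [← C_add]
    rw [C_inj]
    ring
  · have hAne : ((∑ i, l i : ℕ) : ZMod p) ≠ 0 := by
      rw [Ne, ZMod.natCast_eq_zero_iff]; exact hα
    rw [if_neg hα]
    by_cases hγ : p ∣ ((∑ i, l i) + m0)
    · have hγ0 : (((∑ i, l i) + m0 : ℕ) : ZMod p) = 0 :=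
        (ZMod.natCast_eq_zero_iff _ p).mpr hγ
      have hβα : ((m0 : ℕ) : ZMod p) = -((∑ i, l i : ℕ) : ZMod p) := by
        have h2 := hγ0
        rw [Nat.cast_add] at h2
        linear_combination h2
      have hRn : (∏ z : Fin k, (((∑ i, l i) + m0 + PS nn z : ℕ) : ZMod p)⁻¹)
          = ∏ z : Fin k, ((PS nn z : ℕ) : ZMod p)⁻¹ :=
        Finset.prod_congr rfl (fun z _ => by rw [Nat.cast_add, hγ0, zero_add])
      rw [if_pos hγ]
      simp only [hRn, hγ0, inv_zero, hβα, inv_neg]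
      simp only [add_zero, zero_add]
      simp only [← add_mul]
      congr 1
      simp only [← C_add]
      rw [C_inj]
      ring
    · have hγne : (((∑ i, l i) + m0 : ℕ) : ZMod p) ≠ 0 := by
        rw [Ne, ZMod.natCast_eq_zero_iff]; exact hγ
      rw [if_neg hγ]
      simp only [add_zero, zero_add]
      simp only [← add_mul]
      congr 1
      simp only [← C_add]
      rw [C_inj]
      rw [Nat.cast_add] at hγne
      have hkey : ∀ A B : ZMod p, A ≠ 0 → B ≠ 0 → A + B ≠ 0 →
          A⁻¹ * B⁻¹ = B⁻¹ * (A + B)⁻¹ + A⁻¹ * (A + B)⁻¹ := by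
        intro A B hA hB hAB
        field_simp
      simp only [Nat.cast_add]
      linear_combination ((∏ x : Fin a, ((PS l (Fin.castSucc x) : ℕ) : ZMod p)⁻¹) *
          (∏ z : Fin k, (((∑ i, l i : ℕ) : ZMod p) + ((m0 : ℕ) : ZMod p)
            + ((PS nn z : ℕ) : ZMod p))⁻¹))
        * hkey ((∑ i, l i : ℕ) : ZMod p) ((m0 : ℕ) : ZMod p) hAne hβ hγne

end Bridges

lemma key (p : ℕ) (hp : p.Prime) (a k : ℕ) :
    OYmixed p (a+1) 1 k (fun _ => 1) (fun _ => 1) (fun _ => 1)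
      = OYmixed p a 1 (k+1) (fun _ => 1) (fun _ => 1) (fun _ => 1)
        + OY p (a+1+1+k) (fun _ => 1)
        - (∑ i ∈ Finset.Icc 1 (a+1),
            C (Zi p (a+1) (fun j => if (j : ℕ) = a then 2 else 1) i) * X ^ (i * p))
          * OY p k (fun _ => 1)
        - (∑ i ∈ Finset.Icc 1 a, C (Zi p a (fun _ => 1) i) * X ^ (i * p))
          * OY p (k+1) (fun j => if (j : ℕ) = 0 then 2 else 1) := by
  haveI : Fact p.Prime := ⟨hp⟩
  haveI : NeZero p := ⟨hp.ne_zero⟩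
  have hp2 : 2 ≤ p := hp.two_le
  rw [B1 p a k, B2 p a k, B3 p a k, B4 p hp2 a k, B5 p hp2 a k]
  have H : (∑ l ∈ Fintype.piFinset (fun _ : Fin (a+1) => Finset.Ico 1 p),
        ∑ m0 ∈ Finset.Ico 1 p,
          ∑ nn ∈ Fintype.piFinset (fun _ : Fin k => Finset.Ico 1 p), f1 p a k l m0 nn)
      + (∑ l ∈ Fintype.piFinset (fun _ : Fin (a+1) => Finset.Ico 1 p),
        ∑ m0 ∈ Finset.Ico 1 p,
          ∑ nn ∈ Fintype.piFinset (fun _ : Fin k => Finset.Ico 1 p), f4 p a k l m0 nn)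
      + (∑ l ∈ Fintype.piFinset (fun _ : Fin (a+1) => Finset.Ico 1 p),
        ∑ m0 ∈ Finset.Ico 1 p,
          ∑ nn ∈ Fintype.piFinset (fun _ : Fin k => Finset.Ico 1 p), f5 p a k l m0 nn)
      = (∑ l ∈ Fintype.piFinset (fun _ : Fin (a+1) => Finset.Ico 1 p),
        ∑ m0 ∈ Finset.Ico 1 p,
          ∑ nn ∈ Fintype.piFinset (fun _ : Fin k => Finset.Ico 1 p), f2 p a k l m0 nn)
      + (∑ l ∈ Fintype.piFinset (fun _ : Fin (a+1) => Finset.Ico 1 p),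
        ∑ m0 ∈ Finset.Ico 1 p,
          ∑ nn ∈ Fintype.piFinset (fun _ : Fin k => Finset.Ico 1 p), f3 p a k l m0 nn) := by
    simp only [← Finset.sum_add_distrib]
    apply Finset.sum_congr rfl
    intro l _
    apply Finset.sum_congr rfl
    intro m0 hm0
    apply Finset.sum_congr rfl
    intro nn _
    simp only [Finset.mem_Ico] at hm0
    exact pointwise p a k l m0 nn hm0.1 hm0.2
  linear_combination H

end Tele

theorem telescoping_recurrence (p n : ℕ) (hp : p.Prime) (h3 : 3 < p) (hn : n < p)
    (k : ℕ) (hk : k + 2 ≤ n) :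
    OYmixed p (n - k - 1) 1 k (fun _ => 1) (fun _ => 1) (fun _ => 1)
      = OYmixed p (n - k - 2) 1 (k + 1) (fun _ => 1) (fun _ => 1) (fun _ => 1)
        + OY p n (fun _ => 1)
        - (∑ i ∈ Finset.Icc 1 (n - k - 1),
            C (Zi p (n - k - 1) (fun j => if (j : ℕ) = n - k - 2 then 2 else 1) i) * X ^ (i * p))
          * OY p k (fun _ => 1)
        - (∑ i ∈ Finset.Icc 1 (n - k - 2),
            C (Zi p (n - k - 2) (fun _ => 1) i) * X ^ (i * p))
          * OY p (k + 1) (fun j => if (j : ℕ) = 0 then 2 else 1) := by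
  obtain ⟨a, ha⟩ : ∃ a, n - k - 2 = a := ⟨_, rfl⟩
  have e1 : n - k - 1 = a + 1 := by omega
  have e2 : n = a + 1 + 1 + k := by omega
  rw [ha, e1, e2]
  exact Tele.key p hp a k
end
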